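/- arXiv:2509.02177 — 10 statements merged into one kernel-verified Lean document; each statement's English description precedes it below -/
import Mathlib

section
/- Let R be a commutative F_2-algebra with involution ω, d(x) = x + ω(x), S the fixed subring, I = d(R) viewed as an ideal of S, and RI the ideal of R generated by I. For any n ≥ 1, the preimage under d of the ideal I^(n+1) (of S) equals S + R·Iⁿ (as a subset of R). -/
open Finset

/-- Let `R` be a commutative `𝔽₂`-algebra with involutive ring homomorphism `ω`,
`d x = x + ω x`, `S` the fixed subring and `I = d(R)`, an ideal of `S`.  For `n ≥ 1`,
the preimage of `I^(n+1)` (the `(n+1)`-st power of `I` within `S`, i.e. the set of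
finite sums of products of `n+1` elements of `I`) under `d` equals `S + R·Iⁿ`,
where `R·Iⁿ` is the ideal of `R` generated by `Iⁿ`. -/
theorem preimage_of_I_pow_succ {R : Type*} [CommRing R] [Algebra (ZMod 2) R]
    (ω : R →+* R) (hinv : ∀ x, ω (ω x) = x) (n : ℕ) (hn : 1 ≤ n) (x : R) :
    (x + ω x) ∈ AddSubmonoid.closure
        {z : R | ∃ f : Fin (n + 1) → R, z = ∏ i, (f i + ω (f i))} ↔
      ∃ s y : R, ω s = s ∧
        y ∈ Ideal.span {z : R | ∃ f : Fin n → R, z = ∏ i, (f i + ω (f i))} ∧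
        x = s + y := by
  have htwo : ∀ r : R, r + r = 0 := by
    intro r
    have h2 : (2 : R) = 0 := by
      calc (2 : R) = algebraMap (ZMod 2) R 2 := by rw [map_ofNat]
        _ = 0 := by rw [show (2 : ZMod 2) = 0 by decide, map_zero]
    rw [← two_mul, h2, zero_mul]
  have hfix : ∀ a : R, ω (a + ω a) = a + ω a := by
    intro a; rw [map_add, hinv, add_comm]
  have hprodfix : ∀ (m : ℕ) (f : Fin m → R),
      ω (∏ i, (f i + ω (f i))) = ∏ i, (f i + ω (f i)) := by
    intro m f
    rw [map_prod]
    exact Finset.prod_congr rfl fun i _ => hfix (f i)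
  constructor
  · intro hx
    have key : ∀ w ∈ AddSubmonoid.closure
        {z : R | ∃ f : Fin (n + 1) → R, z = ∏ i, (f i + ω (f i))},
        ∃ y ∈ Ideal.span {z : R | ∃ f : Fin n → R, z = ∏ i, (f i + ω (f i))},
          w = y + ω y := by
      intro w hw
      induction hw using AddSubmonoid.closure_induction with
      | mem z hz =>
          obtain ⟨f, rfl⟩ := hz
          refine ⟨f 0 * ∏ i : Fin n, (f i.succ + ω (f i.succ)),
            Ideal.mul_mem_left _ _ (Ideal.subset_span ⟨fun i => f i.succ, rfl⟩), ?_⟩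
          rw [map_mul, hprodfix n fun i => f i.succ, ← add_mul, Fin.prod_univ_succ]
      | zero => exact ⟨0, Ideal.zero_mem _, by simp⟩
      | add a b _ _ ha hb =>
          obtain ⟨y1, hy1, rfl⟩ := ha
          obtain ⟨y2, hy2, rfl⟩ := hb
          exact ⟨y1 + y2, Ideal.add_mem _ hy1 hy2, by rw [map_add]; ring⟩
    obtain ⟨y, hy, heq⟩ := key _ hx
    refine ⟨x + y, y, ?_, hy, ?_⟩
    · rw [map_add]
      linear_combination -heq + htwo (ω x) - htwo y
    · linear_combination -htwo y
  · rintro ⟨s, y, hs, hy, rfl⟩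
    have hd : (s + y) + ω (s + y) = y + ω y := by
      rw [map_add, hs]; linear_combination htwo s
    rw [hd]
    rw [Ideal.span, Submodule.mem_span_set] at hy
    obtain ⟨c, hsupp, rfl⟩ := hy
    rw [Finsupp.sum]
    rw [map_sum, ← Finset.sum_add_distrib]
    refine AddSubmonoid.sum_mem _ fun t ht => ?_
    have htT := hsupp ht
    obtain ⟨g, rfl⟩ := htT
    refine AddSubmonoid.subset_closure ?_
    refine ⟨Fin.cons (c (∏ i, (g i + ω (g i)))) g, ?_⟩
    rw [Fin.prod_univ_succ]
    simp only [Fin.cons_zero, Fin.cons_succ]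
    rw [smul_eq_mul, map_mul, hprodfix n g, ← add_mul]
end

section
/- In R = F_2[w₁, w₂, ...] with involution ω defined by Σ_{i=0}^{k} wᵢ·ω(w_{k-i}) = 0 for k ≥ 1, the following closed formula holds: ω(w_k) = Σ w_{i₁}⋯w_{i_p}, where the sum runs over all ordered sequences (i₁, ..., i_p) of positive integers with i₁ + ⋯ + i_p = k (i.e., over all compositions of k). -/
open Finset

/-- The variables `w₁, w₂, …` of `R = 𝔽₂[w₁, w₂, …]`, with the convention `w₀ = 1`. -/
noncomputable def w : ℕ → MvPolynomial ℕ (ZMod 2)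
  | 0 => 1
  | k + 1 => MvPolynomial.X k

noncomputable def S (n : ℕ) : MvPolynomial ℕ (ZMod 2) :=
  ∑ c : Composition n, (c.blocks.map w).prod

lemma S_zero : S 0 = 1 := by
  have : ∀ c : Composition 0, c.blocks = [] := by
    intro c
    rcases c with ⟨bs, hpos, hsum⟩
    cases bs with
    | nil => rfl
    | cons a l =>
        exfalso
        have ha : 0 < a := hpos List.mem_cons_self
        simp only [List.sum_cons] at hsum
        omega
  rw [S]
  rw [Fintype.sum_eq_single (⟨[], by simp, by simp⟩ : Composition 0)]
  · simp
  · intro c hc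
    exfalso
    exact hc (Composition.ext (this c))

def compEquiv (k : ℕ) (hk : 0 < k) :
    Composition k ≃ Σ j : Fin k, Composition (k - (j + 1)) where
  toFun c :=
    ⟨⟨c.blocks.head (by
        intro h
        have := c.blocks_sum
        rw [h] at this
        simp at this
        omega) - 1, by
        have hne : c.blocks ≠ [] := by
          intro h
          have := c.blocks_sum
          rw [h] at this; simp at this; omega
        have hmem := List.head_mem hne
        have hle : c.blocks.head hne ≤ c.blocks.sum :=
          List.single_le_sum (fun x _ => Nat.zero_le x) _ hmem
        have := c.blocks_sum
        have hpos := c.blocks_pos hmem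
        omega⟩,
      ⟨c.blocks.tail,
        fun hi => c.blocks_pos (List.mem_of_mem_tail hi),
        by
        have hne : c.blocks ≠ [] := by
          intro h
          have := c.blocks_sum
          rw [h] at this; simp at this; omega
        have hpos := c.blocks_pos (List.head_mem hne)
        have ht := List.cons_head_tail (l := c.blocks) hne
        have hs : (c.blocks.head hne :: c.blocks.tail).sum = k := by
          rw [ht]; exact c.blocks_sum
        simp only [List.sum_cons] at hs
        simp only [Fin.val_mk]
        omega⟩⟩
  invFun x :=
    ⟨(x.1.val + 1) :: x.2.blocks,
      by
        intro i hi
        rcases List.mem_cons.1 hi with h | h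
        · omega
        · exact x.2.blocks_pos h,
      by
        have := x.2.blocks_sum
        have := x.1.isLt
        simp only [List.sum_cons]
        omega⟩
  left_inv c := by
    have hne : c.blocks ≠ [] := by
      intro h
      have := c.blocks_sum
      rw [h] at this; simp at this; omega
    apply Composition.ext
    simp only []
    have hpos := c.blocks_pos (List.head_mem hne)
    rw [Nat.sub_add_cancel hpos]
    exact List.cons_head_tail (l := c.blocks) hne
  right_inv x := rfl

lemma S_rec (k : ℕ) (hk : 1 ≤ k) :
    S k = ∑ i ∈ Finset.range k, w (i + 1) * S (k - (i + 1)) := by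
  rw [S]
  rw [← Equiv.sum_comp (compEquiv k hk).symm
    (fun c : Composition k => (c.blocks.map w).prod)]
  rw [← Finset.univ_sigma_univ, Finset.sum_sigma]
  rw [← Fin.sum_univ_eq_sum_range]
  apply Finset.sum_congr rfl
  intro j _
  rw [S, Finset.mul_sum]
  apply Finset.sum_congr rfl
  intro c _
  have : ((compEquiv k hk).symm ⟨j, c⟩).blocks = (j.val + 1) :: c.blocks := rfl
  rw [this]
  simp

/-- Closed formula for the involution `ω` on `R = 𝔽₂[w₁, w₂, …]` defined by the
recursion `∑_{i=0}^{k} wᵢ · ω (w_{k-i}) = 0`: for `k ≥ 1`,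
`ω (w_k) = ∑ w_{i₁} ⋯ w_{i_p}`, the sum running over all compositions
`(i₁, …, i_p)` of `k` into positive integers. -/
theorem omega_w_eq_sum_over_compositions
    (ω : MvPolynomial ℕ (ZMod 2) →+* MvPolynomial ℕ (ZMod 2))
    (hω : ∀ k : ℕ, 1 ≤ k → ∑ i ∈ Finset.range (k + 1), w i * ω (w (k - i)) = 0)
    (k : ℕ) (hk : 1 ≤ k) :
    ω (w k) = ∑ c : Composition k, (c.blocks.map w).prod := by
  suffices h : ω (w k) = S k by rw [h, S]
  induction k using Nat.strong_induction_on with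
  | _ k IH =>
    have hrec := hω k hk
    rw [Finset.sum_range_succ'] at hrec
    have hw0 : w 0 = 1 := rfl
    have hterm : ∀ i ∈ Finset.range k, w (i + 1) * ω (w (k - (i + 1)))
        = w (i + 1) * S (k - (i + 1)) := by
      intro i hi
      simp only [Finset.mem_range] at hi
      rcases Nat.eq_zero_or_pos (k - (i + 1)) with h0 | hp
      · rw [h0, S_zero, hw0, map_one]
      · rw [IH _ (by omega) hp]
    rw [Finset.sum_congr rfl hterm] at hrec
    simp only [Nat.sub_zero, hw0, one_mul] at hrec
    have : ω (w k) = -(∑ i ∈ Finset.range k, w (i + 1) * S (k - (i + 1))) := by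
      linear_combination hrec
    rw [this, S_rec k hk]
    rw [CharTwo.neg_eq]
end

section
/- In R = F_2[w₁, w₂, ...] with involution ω as above, the involution ω is normal: for every homogeneous x ∈ R of strictly positive degree, the norm N(x) = x·ω(x) lies in the ideal I = {y + ω(y) : y ∈ R} of the fixed subring S. -/
open Finset

/-- The involution `ω` on `R = 𝔽₂[w₁, w₂, …]` (defined by the recursion
`∑_{i=0}^{k} wᵢ · ω (w_{k-i}) = 0`) is normal: for every homogeneous `x` of strictly
positive degree (with respect to the grading `deg wᵢ = i`), the norm `N x = x · ω x`
lies in `I = {y + ω y : y ∈ R}`. -/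
theorem omega_normal
    (ω : MvPolynomial ℕ (ZMod 2) →+* MvPolynomial ℕ (ZMod 2))
    (hω : ∀ k : ℕ, 1 ≤ k → ∑ i ∈ Finset.range (k + 1), w i * ω (w (k - i)) = 0)
    (x : MvPolynomial ℕ (ZMod 2)) (m : ℕ) (hm : 0 < m)
    (hx : MvPolynomial.IsWeightedHomogeneous (fun n : ℕ => n + 1) x m) :
    ∃ y : MvPolynomial ℕ (ZMod 2), x * ω x = y + ω y := by
  classical
  have hchar : ∀ a b : MvPolynomial ℕ (ZMod 2), a + b = 0 → a = b := by
    intro a b h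
    rw [add_eq_zero_iff_eq_neg] at h
    rw [h, CharTwo.neg_eq]
  have hself : ∀ a : MvPolynomial ℕ (ZMod 2), a + a = 0 := fun a =>
    CharTwo.add_self_eq_zero a
  have hC : ∀ a : ZMod 2, ω (MvPolynomial.C a) = MvPolynomial.C a := by
    intro a; exact RingHom.congr_fun (Subsingleton.elim (ω.comp MvPolynomial.C) MvPolynomial.C) a
  -- `ω ∘ ω` fixes each `w k`
  have hωw : ∀ k, ω (ω (w k)) = w k := by
    intro k
    induction k using Nat.strong_induction_on with
    | _ k ih =>
      match k with
      | 0 => simp [w]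
      | (n+1) =>
        have h1 := hω (n+1) (by omega)
        have h2 : ∑ i ∈ Finset.range (n + 2), ω (w i) * ω (ω (w (n+1-i))) = 0 := by
          have := congrArg ω h1
          simpa [map_sum, map_mul] using this
        have h4 := Finset.sum_range_reflect (fun i => w i * ω (w (n+1-i))) (n+2)
        rw [h1] at h4
        have h3 : ∑ i ∈ Finset.range (n + 2), ω (w i) * w (n+1-i) = 0 := by
          rw [← h4]
          apply Finset.sum_congr rfl
          intro j hj
          simp only [Finset.mem_range] at hj
          have e1 : n + 2 - 1 - j = n + 1 - j := by omega
          have e2 : n + 1 - (n + 1 - j) = j := by omega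
          rw [e1, e2, mul_comm]
        have h6 : ∑ i ∈ Finset.range (n + 2),
            ω (w i) * (ω (ω (w (n+1-i))) + w (n+1-i)) = 0 := by
          simp only [mul_add]
          rw [Finset.sum_add_distrib, h2, h3, add_zero]
        rw [Finset.sum_range_succ'] at h6
        have h7 : ∑ i ∈ Finset.range (n + 1),
            ω (w (i+1)) * (ω (ω (w (n+1-(i+1)))) + w (n+1-(i+1))) = 0 := by
          apply Finset.sum_eq_zero
          intro i hi
          rw [ih (n+1-(i+1)) (by omega), hself, mul_zero]
        rw [h7, zero_add] at h6
        have hw0 : ω (w 0) = 1 := by simp [w]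
        rw [hw0, one_mul] at h6
        simpa using hchar _ _ h6
  -- `ω` is an involution
  have hω2 : ∀ p, ω (ω p) = p := by
    have hcomp : ω.comp ω = RingHom.id _ := by
      apply MvPolynomial.ringHom_ext
      · intro a
        simp [RingHom.comp_apply, hC]
      · intro n
        have := hωw (n + 1)
        simpa [w] using this
    intro p
    have h := congrArg (fun f : MvPolynomial ℕ (ZMod 2) →+* MvPolynomial ℕ (ZMod 2) => f p) hcomp
    simpa using h
  -- cross terms are in the image of `1 + ω`
  have Pcross : ∀ a b : MvPolynomial ℕ (ZMod 2),
      ∃ y, a * ω b + b * ω a = y + ω y := by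
    intro a b
    refine ⟨a * ω b, ?_⟩
    rw [map_mul, hω2]
    ring
  -- the image of `1 + ω` is stable under multiplication by `ω`-fixed elements
  have Pmulfix : ∀ s u : MvPolynomial ℕ (ZMod 2), ω s = s →
      (∃ y, u = y + ω y) → ∃ y, s * u = y + ω y := by
    rintro s u hs ⟨y, rfl⟩
    refine ⟨s * y, ?_⟩
    rw [map_mul, hs]
    ring
  -- the norm of each generator is in the image of `1 + ω`
  have PNw : ∀ j : ℕ, 1 ≤ j → ∃ y, w j * ω (w j) = y + ω y := by
    intro j hj
    set y : MvPolynomial ℕ (ZMod 2) :=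
      ∑ t ∈ Finset.range j, w (j+1+t) * ω (w (j-1-t)) with hy
    refine ⟨y, ?_⟩
    have hωy : ω y = ∑ t ∈ Finset.range j, ω (w (j+1+t)) * w (j-1-t) := by
      rw [hy, map_sum]
      exact Finset.sum_congr rfl fun t _ => by rw [map_mul, hω2]
    have h1 := hω (2*j) (by omega)
    rw [show 2*j+1 = (j+1) + j by omega, Finset.sum_range_add,
        Finset.sum_range_succ] at h1
    have e0 : 2*j - j = j := by omega
    rw [e0] at h1
    have e1 : ∑ i ∈ Finset.range j, w i * ω (w (2*j - i)) = ω y := by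
      rw [← Finset.sum_range_reflect (fun i => w i * ω (w (2*j - i))) j, hωy]
      apply Finset.sum_congr rfl
      intro t ht
      simp only [Finset.mem_range] at ht
      have e2 : 2*j - (j - 1 - t) = j+1+t := by omega
      rw [e2, mul_comm]
    have e3 : ∑ t ∈ Finset.range j, w (j+1+t) * ω (w (2*j - (j+1+t))) = y := by
      rw [hy]
      apply Finset.sum_congr rfl
      intro t ht
      simp only [Finset.mem_range] at ht
      have e4 : 2*j - (j+1+t) = j-1-t := by omega
      rw [e4]
    rw [e1, e3] at h1
    apply hchar
    calc w j * ω (w j) + (y + ω y) = ω y + w j * ω (w j) + y := by ring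
    _ = 0 := h1
  have PNX : ∀ n : ℕ, ∃ y,
      MvPolynomial.X n * ω (MvPolynomial.X n) = y + ω y := by
    intro n
    simpa [w] using PNw (n+1) (by omega)
  -- main induction : the norm of any polynomial is its constant term modulo `im (1 + ω)`
  have main : ∀ p : MvPolynomial ℕ (ZMod 2),
      ∃ y, p * ω p = MvPolynomial.C (MvPolynomial.constantCoeff p) + (y + ω y) := by
    intro p
    induction p using MvPolynomial.induction_on with
    | C a =>
      have haa : a * a = a := by fin_cases a <;> rfl
      refine ⟨0, ?_⟩
      rw [hC, ← MvPolynomial.C_mul, haa]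
      simp
    | add p q hp hq =>
      obtain ⟨yp, hyp⟩ := hp
      obtain ⟨yq, hyq⟩ := hq
      obtain ⟨yc, hyc⟩ := Pcross p q
      refine ⟨yp + yq + yc, ?_⟩
      have hexp : (p + q) * ω (p + q)
          = p * ω p + q * ω q + (p * ω q + q * ω p) := by
        rw [map_add]; ring
      rw [hexp, hyp, hyq, hyc]
      simp only [map_add, MvPolynomial.C_add]
      ring
    | mul_X p n hp =>
      obtain ⟨yp, hyp⟩ := hp
      obtain ⟨yn, hyn⟩ := PNX n
      have hfix : ω (yn + ω yn) = yn + ω yn := by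
        rw [map_add, hω2]; ring
      obtain ⟨y1, hy1⟩ := Pmulfix (MvPolynomial.C (MvPolynomial.constantCoeff p))
        (yn + ω yn) (hC _) ⟨yn, rfl⟩
      obtain ⟨y2, hy2⟩ := Pmulfix (yn + ω yn) (yp + ω yp) hfix ⟨yp, rfl⟩
      refine ⟨y1 + y2, ?_⟩
      have hN : (p * MvPolynomial.X n) * ω (p * MvPolynomial.X n)
          = (MvPolynomial.C (MvPolynomial.constantCoeff p) + (yp + ω yp))
            * (MvPolynomial.X n * ω (MvPolynomial.X n)) := by
        rw [← hyp, map_mul]; ring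
      have hsplit : (MvPolynomial.C (MvPolynomial.constantCoeff p) + (yp + ω yp))
            * (yn + ω yn)
          = MvPolynomial.C (MvPolynomial.constantCoeff p) * (yn + ω yn)
            + (yn + ω yn) * (yp + ω yp) := by ring
      have hc0 : MvPolynomial.constantCoeff (p * MvPolynomial.X n) = 0 := by
        simp [map_mul]
      rw [hN, hyn, hsplit, hy1, hy2, hc0]
      simp only [map_zero, MvPolynomial.C_0, map_add]
      ring
  have hc : MvPolynomial.constantCoeff x = 0 := by
    by_contra h
    have h0 := hx (d := 0) (by rwa [MvPolynomial.constantCoeff_eq] at h)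
    rw [map_zero] at h0
    omega
  obtain ⟨y, hy⟩ := main x
  refine ⟨y, ?_⟩
  rw [hy, hc]
  simp
end

section
/- In R = F_2[w₁, w₂, ...] with involution ω as above, the ideal RI of R generated by I = {x + ω(x) : x ∈ R} equals the ideal Q(R) of R generated by squares of all elements of strictly positive degree (equivalently, generated by all wᵢ²). -/
open Finset

/-- In `R = 𝔽₂[w₁, w₂, …]` with the involution `ω` defined by the recursion
`∑_{i=0}^{k} wᵢ · ω (w_{k-i}) = 0`, the ideal `R·I` generated by
`I = {y + ω y : y ∈ R}` equals the ideal of squares `Q(R)`, generated by the squares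
of all homogeneous elements of strictly positive degree. -/
theorem RI_eq_ideal_of_squares
    (ω : MvPolynomial ℕ (ZMod 2) →+* MvPolynomial ℕ (ZMod 2))
    (hω : ∀ k : ℕ, 1 ≤ k → ∑ i ∈ Finset.range (k + 1), w i * ω (w (k - i)) = 0) :
    Ideal.span (Set.range fun y : MvPolynomial ℕ (ZMod 2) => y + ω y) =
      Ideal.span {z : MvPolynomial ℕ (ZMod 2) |
        ∃ (x : MvPolynomial ℕ (ZMod 2)) (m : ℕ), 0 < m ∧
          MvPolynomial.IsWeightedHomogeneous (fun n : ℕ => n + 1) x m ∧ z = x ^ 2} := by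
  classical
  set R := MvPolynomial ℕ (ZMod 2)
  set RI : Ideal R := Ideal.span (Set.range fun y : R => y + ω y) with hRI
  set Q : Ideal R := Ideal.span {z : R |
      ∃ (x : R) (m : ℕ), 0 < m ∧
        MvPolynomial.IsWeightedHomogeneous (fun n : ℕ => n + 1) x m ∧ z = x ^ 2} with hQdef
  have hchar : ∀ a : R, a + a = 0 := fun a => CharTwo.add_self_eq_zero a
  -- rearrangement of hω
  have hS : ∀ k : ℕ, 1 ≤ k →
      (∑ i ∈ range (k + 1), w i * w (k - i)) =
        ∑ i ∈ range (k + 1), w i * (w (k - i) + ω (w (k - i))) := by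
    intro k hk
    simp only [mul_add, Finset.sum_add_distrib, hω k hk, add_zero]
  -- odd symmetric sums vanish
  have S_odd : ∀ k : ℕ, k % 2 = 1 → (∑ i ∈ range (k + 1), w i * w (k - i)) = 0 := by
    intro k hk
    refine Finset.sum_involution (fun i _ => k - i) ?_ ?_ ?_ ?_
    · intro a ha
      simp only [mem_range] at ha
      rw [Nat.sub_sub_self (by omega : a ≤ k), mul_comm]; exact hchar _
    · intro a ha _
      show k - a ≠ a
      simp only [mem_range] at ha; omega
    · intro a ha; simp only [mem_range] at ha ⊢; omega
    · intro a ha; show k - (k - a) = a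
      simp only [mem_range] at ha; omega
  -- even symmetric sums are the middle square
  have S_even : ∀ j : ℕ, (∑ i ∈ range (2 * j + 1), w i * w (2 * j - i)) = w j ^ 2 := by
    intro j
    have hmem : j ∈ range (2 * j + 1) := by simp only [mem_range]; omega
    rw [← Finset.add_sum_erase _ _ hmem]
    have h0 : (∑ i ∈ (range (2 * j + 1)).erase j, w i * w (2 * j - i)) = 0 := by
      refine Finset.sum_involution (fun i _ => 2 * j - i) ?_ ?_ ?_ ?_
      · intro a ha
        simp only [mem_erase, mem_range] at ha
        rw [Nat.sub_sub_self (by omega : a ≤ 2 * j), mul_comm]; exact hchar _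
      · intro a ha _
        show 2 * j - a ≠ a
        simp only [mem_erase, mem_range] at ha; omega
      · intro a ha; simp only [mem_erase, mem_range] at ha ⊢; omega
      · intro a ha; show 2 * j - (2 * j - a) = a
        simp only [mem_erase, mem_range] at ha; omega
    rw [h0, add_zero]
    have : 2 * j - j = j := by omega
    rw [this, sq]
  -- squares of variables lie in RI
  have sq_mem_RI : ∀ j : ℕ, 1 ≤ j → w j ^ 2 ∈ RI := by
    intro j hj
    have h := hS (2 * j) (by omega)
    rw [S_even j] at h
    rw [h]
    refine Ideal.sum_mem _ fun i _ => Ideal.mul_mem_left _ _ ?_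
    exact Ideal.subset_span ⟨w (2 * j - i), rfl⟩
  -- symmetric sums lie in Q
  have S_mem_Q : ∀ k : ℕ, 1 ≤ k → (∑ i ∈ range (k + 1), w i * w (k - i)) ∈ Q := by
    intro k hk
    rcases Nat.even_or_odd k with ⟨j, hj⟩ | hodd
    · have hkj : k = 2 * j := by omega
      subst hkj
      rw [S_even j]
      exact Ideal.subset_span ⟨w j, j, by omega,
        (by have : w j = MvPolynomial.X (j - 1) := by
              obtain ⟨m, rfl⟩ : ∃ m, j = m + 1 := ⟨j - 1, by omega⟩
              rfl
            rw [this]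
            have h := MvPolynomial.isWeightedHomogeneous_X (ZMod 2) (fun n : ℕ => n + 1) (j - 1)
            simpa [show j - 1 + 1 = j by omega] using h), rfl⟩
    · rw [S_odd k (Nat.odd_iff.mp hodd)]; exact zero_mem _
  -- d (w k) ∈ Q for all k
  have dwQ : ∀ k : ℕ, w k + ω (w k) ∈ Q := by
    intro k
    induction k using Nat.strong_induction_on with
    | _ k ih =>
      match k with
      | 0 =>
        show (1 : R) + ω 1 ∈ Q
        rw [map_one, hchar]; exact zero_mem _
      | (n+1) =>
        have h := hS (n + 1) (by omega)
        nth_rewrite 2 [Finset.sum_range_succ'] at h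
        have hw0 : w 0 = (1 : R) := rfl
        rw [Nat.sub_zero, hw0, one_mul] at h
        have key : (∑ i ∈ range (n + 1 + 1), w i * w (n + 1 - i)) +
            (∑ i ∈ range (n + 1),
              w (i + 1) * (w (n + 1 - (i + 1)) + ω (w (n + 1 - (i + 1))))) =
            w (n + 1) + ω (w (n + 1)) := by
          rw [h, add_right_comm, ← add_assoc, hchar, zero_add]
        rw [← key]
        refine add_mem (S_mem_Q (n + 1) (by omega)) (Ideal.sum_mem _ fun i hi => ?_)
        refine Ideal.mul_mem_left _ _ (ih (n + 1 - (i + 1)) ?_)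
        simp only [mem_range] at hi; omega
  -- Direction RI ≤ Q
  have dQ : ∀ y : R, y + ω y ∈ Q := by
    intro y
    induction y using MvPolynomial.induction_on with
    | C a =>
      fin_cases a
      · show MvPolynomial.C (0 : ZMod 2) + ω (MvPolynomial.C 0) ∈ Q
        rw [map_zero, map_zero, add_zero]; exact zero_mem _
      · show MvPolynomial.C (1 : ZMod 2) + ω (MvPolynomial.C 1) ∈ Q
        rw [map_one, map_one, hchar]; exact zero_mem _
    | add p q hp hq =>
      have hrw : p + q + ω (p + q) = (p + ω p) + (q + ω q) := by rw [map_add]; ring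
      rw [hrw]; exact add_mem hp hq
    | mul_X p n hp =>
      have hX : MvPolynomial.X n + ω (MvPolynomial.X n) ∈ Q := dwQ (n + 1)
      have hrw : p * MvPolynomial.X n + ω (p * MvPolynomial.X n) =
          p * (MvPolynomial.X n + ω (MvPolynomial.X n)) + (p + ω p) * ω (MvPolynomial.X n) := by
        rw [map_mul]
        linear_combination -hchar (p * ω (MvPolynomial.X n))
      rw [hrw]
      exact add_mem (Ideal.mul_mem_left _ _ hX) (Ideal.mul_mem_right _ _ hp)
  refine le_antisymm ?_ ?_
  · rw [hRI, Ideal.span_le]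
    rintro _ ⟨y, rfl⟩
    exact dQ y
  · rw [hQdef, Ideal.span_le]
    rintro z ⟨x, m, hm, hhom, rfl⟩
    show x ^ 2 ∈ RI
    have hx : x ∈ Ideal.span (MvPolynomial.X '' Set.univ : Set R) := by
      rw [MvPolynomial.mem_ideal_span_X_image]
      intro d hd
      have hco := MvPolynomial.mem_support_iff.mp hd
      have hwt := hhom hco
      have hd0 : d ≠ 0 := by
        rintro rfl
        rw [map_zero] at hwt
        omega
      obtain ⟨i, hi⟩ := Finsupp.ne_iff.mp hd0
      exact ⟨i, Set.mem_univ i, by simpa using hi⟩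
    refine Submodule.span_induction ?_ ?_ ?_ ?_ hx
    · rintro p ⟨i, -, rfl⟩
      exact sq_mem_RI (i + 1) (by omega)
    · rw [zero_pow (by norm_num : (2 : ℕ) ≠ 0)]; exact zero_mem _
    · intro a b _ _ ha hb
      rw [CharTwo.add_sq]
      exact add_mem ha hb
    · intro r p _ hp
      rw [smul_eq_mul, mul_pow]
      exact Ideal.mul_mem_left _ _ hp
end

section
/- In R = F_2[w₁, w₂, ...] with involution ω as above, for every i ≥ 1 the following identity holds: d(w_{2i}) = wᵢ² + Σ_{k=1}^{i-1} ω(w_{2(i-k)})·w_k², where d(x) = x + ω(x). -/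
open Finset

/-- Char-2 convolution square: `∑_{j=0}^n f j · f (n-j)` is `f (n/2)²` if `n` even, else `0`. -/
lemma conv_self_char_two {R : Type*} [CommRing R] [CharP R 2] (f : ℕ → R) (n : ℕ) :
    ∑ j ∈ Finset.range (n + 1), f j * f (n - j) =
      if 2 ∣ n then f (n / 2) ^ 2 else 0 := by
  by_cases h : 2 ∣ n
  · obtain ⟨m, rfl⟩ := h
    rw [if_pos (show 2 ∣ 2 * m from Dvd.intro m rfl)]
    have hm : m ∈ Finset.range (2 * m + 1) := Finset.mem_range.mpr (by omega)
    rw [← Finset.add_sum_erase _ _ hm]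
    have hmid : f m * f (2 * m - m) = f (2 * m / 2) ^ 2 := by
      have : 2 * m - m = m := by omega
      have h2 : 2 * m / 2 = m := by omega
      rw [this, h2, sq]
    rw [hmid]
    have hz : ∑ x ∈ (Finset.range (2 * m + 1)).erase m, f x * f (2 * m - x) = 0 := by
      refine Finset.sum_involution (fun a _ => 2 * m - a) ?_ ?_ ?_ ?_
      · intro a ha
        have ha' : a ≤ 2 * m ∧ a ≠ m := by
          simp only [Finset.mem_erase, Finset.mem_range] at ha; omega
        show f a * f (2 * m - a) + f (2 * m - a) * f (2 * m - (2 * m - a)) = 0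
        have : 2 * m - (2 * m - a) = a := by omega
        rw [this, mul_comm]
        exact CharTwo.add_self_eq_zero _
      · intro a ha _
        have ha' : a ≤ 2 * m ∧ a ≠ m := by
          simp only [Finset.mem_erase, Finset.mem_range] at ha; omega
        show 2 * m - a ≠ a
        omega
      · intro a ha
        have ha' : a ≤ 2 * m ∧ a ≠ m := by
          simp only [Finset.mem_erase, Finset.mem_range] at ha; omega
        show 2 * m - a ∈ (Finset.range (2 * m + 1)).erase m
        simp only [Finset.mem_erase, Finset.mem_range]
        omega
      · intro a ha
        have ha' : a ≤ 2 * m ∧ a ≠ m := by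
          simp only [Finset.mem_erase, Finset.mem_range] at ha; omega
        show 2 * m - (2 * m - a) = a
        omega
    rw [hz, add_zero]
  · rw [if_neg h]
    refine Finset.sum_involution (fun a _ => n - a) ?_ ?_ ?_ ?_
    · intro a ha
      have ha' : a ≤ n := by simp only [Finset.mem_range] at ha; omega
      show f a * f (n - a) + f (n - a) * f (n - (n - a)) = 0
      have : n - (n - a) = a := by omega
      rw [this, mul_comm]
      exact CharTwo.add_self_eq_zero _
    · intro a ha _
      have ha' : a ≤ n := by simp only [Finset.mem_range] at ha; omega
      show n - a ≠ a
      intro hc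
      exact h ⟨a, by omega⟩
    · intro a ha
      show n - a ∈ Finset.range (n + 1)
      simp only [Finset.mem_range] at ha ⊢; omega
    · intro a ha
      have ha' : a ≤ n := by simp only [Finset.mem_range] at ha; omega
      show n - (n - a) = a
      omega

/-- In `R = 𝔽₂[w₁, w₂, …]` with the involution `ω` defined by the recursion
`∑_{j=0}^{k} w_j · ω (w_{k-j}) = 0` and `d x = x + ω x`, for every `i ≥ 1`:
`d (w_{2i}) = wᵢ² + ∑_{k=1}^{i-1} ω (w_{2(i-k)}) · w_k²`. -/
theorem d_w_two_i
    (ω : MvPolynomial ℕ (ZMod 2) →+* MvPolynomial ℕ (ZMod 2))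
    (hω : ∀ k : ℕ, 1 ≤ k → ∑ j ∈ Finset.range (k + 1), w j * ω (w (k - j)) = 0)
    (i : ℕ) (hi : 1 ≤ i) :
    w (2 * i) + ω (w (2 * i)) =
      w i ^ 2 + ∑ k ∈ Finset.Ico 1 i, ω (w (2 * (i - k))) * w k ^ 2 := by
  set R := MvPolynomial ℕ (ZMod 2)
  set A : PowerSeries R := PowerSeries.mk w with hA
  set B : PowerSeries R := PowerSeries.mk (fun n => ω (w n)) with hB
  have hw0 : w 0 = 1 := rfl
  have hAB : A * B = 1 := by
    apply PowerSeries.ext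
    intro n
    rw [PowerSeries.coeff_mul, Finset.Nat.sum_antidiagonal_eq_sum_range_succ_mk,
      PowerSeries.coeff_one]
    simp only [hA, hB, PowerSeries.coeff_mk]
    rcases Nat.eq_zero_or_pos n with rfl | hn
    · simp [hw0]
    · rw [if_neg (by omega)]
      exact hω n hn
  -- coefficient of `t^{2i}` in `A * A * B = A`
  have key : w (2 * i) =
      ∑ j ∈ Finset.range (2 * i + 1),
        (if 2 ∣ j then w (j / 2) ^ 2 else 0) * ω (w (2 * i - j)) := by
    have h1 : (PowerSeries.coeff (R := R) (2 * i)) (A * A * B) = w (2 * i) := by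
      rw [mul_assoc, hAB, mul_one, hA, PowerSeries.coeff_mk]
    rw [← h1, PowerSeries.coeff_mul, Finset.Nat.sum_antidiagonal_eq_sum_range_succ_mk]
    refine Finset.sum_congr rfl fun j _ => ?_
    congr 1
    · rw [PowerSeries.coeff_mul, Finset.Nat.sum_antidiagonal_eq_sum_range_succ_mk]
      simp only [hA, PowerSeries.coeff_mk]
      exact conv_self_char_two w j
    · simp [hB]
  -- reindex the even terms
  have key2 : w (2 * i) = ∑ k ∈ Finset.range (i + 1), w k ^ 2 * ω (w (2 * i - 2 * k)) := by
    rw [key]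
    have h1 : ∑ j ∈ Finset.range (2 * i + 1),
        (if 2 ∣ j then w (j / 2) ^ 2 else 0) * ω (w (2 * i - j)) =
        ∑ j ∈ Finset.range (2 * i + 1),
        (if 2 ∣ j then w (j / 2) ^ 2 * ω (w (2 * i - j)) else 0) := by
      refine Finset.sum_congr rfl fun j _ => ?_
      split <;> simp
    rw [h1, ← Finset.sum_filter]
    refine Finset.sum_bij' (fun j _ => j / 2) (fun k _ => 2 * k) ?_ ?_ ?_ ?_ ?_
    · intro a ha
      simp only [Finset.mem_filter, Finset.mem_range] at ha
      show a / 2 ∈ Finset.range (i + 1)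
      simp only [Finset.mem_range]
      omega
    · intro a ha
      simp only [Finset.mem_range] at ha
      show 2 * a ∈ (Finset.range (2 * i + 1)).filter (2 ∣ ·)
      simp only [Finset.mem_filter, Finset.mem_range]
      omega
    · intro a ha
      simp only [Finset.mem_filter, Finset.mem_range] at ha
      show 2 * (a / 2) = a
      omega
    · intro a _
      show 2 * a / 2 = a
      omega
    · intro a ha
      simp only [Finset.mem_filter, Finset.mem_range] at ha
      show w (a / 2) ^ 2 * ω (w (2 * i - a)) = w (a / 2) ^ 2 * ω (w (2 * i - 2 * (a / 2)))
      have h2 : 2 * (a / 2) = a := by omega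
      rw [h2]
  -- split off the first and last terms
  have hS : ∑ k ∈ Finset.Ico 1 i, w k ^ 2 * ω (w (2 * i - 2 * k)) =
      ∑ k ∈ Finset.Ico 1 i, ω (w (2 * (i - k))) * w k ^ 2 := by
    refine Finset.sum_congr rfl fun k hk => ?_
    simp only [Finset.mem_Ico] at hk
    have : 2 * (i - k) = 2 * i - 2 * k := by omega
    rw [this, mul_comm]
  have hfin : w (2 * i) =
      ω (w (2 * i)) + (∑ k ∈ Finset.Ico 1 i, ω (w (2 * (i - k))) * w k ^ 2) + w i ^ 2 := by
    conv_lhs => rw [key2]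
    rw [Finset.sum_range_succ, Finset.range_eq_Ico,
      Finset.sum_eq_sum_Ico_succ_bot (by omega : 0 < i), hS]
    have h0 : w 0 ^ 2 * ω (w (2 * i - 2 * 0)) = ω (w (2 * i)) := by
      simp [hw0]
    have hlast : w i ^ 2 * ω (w (2 * i - 2 * i)) = w i ^ 2 := by
      have : 2 * i - 2 * i = 0 := by omega
      rw [this, hw0, map_one, mul_one]
    rw [h0, hlast]
  have h2 : ω (w (2 * i)) + ω (w (2 * i)) = 0 := CharTwo.add_self_eq_zero _
  linear_combination hfin + h2
end

section
/- In R = F_2[w₁, w₂, ...] with involution ω and power sums p_k as above, for every odd k ≥ 1: p_k² = Σ_{i=0}^{(k-1)/2} [ d(w_{2i}·w_{2(k-i)}) + d(w_{2i})·d(w_{2(k-i)}) ], where d(x) = x + ω(x) and w₀ = 1. -/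
open Finset

namespace PSqAux

open PowerSeries

abbrev R : Type := MvPolynomial ℕ (ZMod 2)

lemma two_zero_R : (2 : R) = 0 := CharTwo.two_eq_zero

lemma two_zero : (2 : PowerSeries R) = 0 := by
  have : (2 : PowerSeries R) = PowerSeries.C 2 := by simp [map_ofNat]
  rw [this, two_zero_R, map_zero]

lemma addself (x : PowerSeries R) : x + x = 0 := by
  rw [← two_mul, two_zero, zero_mul]

lemma addselfR (x : R) : x + x = 0 := by
  rw [← two_mul, two_zero_R, zero_mul]

lemma eq_of_add_zero_R {x y : R} (h : x + y = 0) : x = y := by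
  have h1 : x = -y := eq_neg_of_add_eq_zero_left h
  have h2 : -y = y := neg_eq_of_add_eq_zero_left (addselfR y)
  rw [h1, h2]

lemma addsq (x y : PowerSeries R) : (x + y) ^ 2 = x ^ 2 + y ^ 2 := by
  have : (x + y) ^ 2 = x ^ 2 + y ^ 2 + 2 * (x * y) := by ring
  rw [this, two_zero, zero_mul, add_zero]

/-- coefficient of a square -/
lemma coeff_sq (f : PowerSeries R) (k : ℕ) :
    PowerSeries.coeff (2 * k) (f ^ 2) = (PowerSeries.coeff k f) ^ 2 := by
  rw [sq, sq, PowerSeries.coeff_mul]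
  have hk : ((k, k) : ℕ × ℕ) ∈ antidiagonal (2 * k) := by
    simp [two_mul]
  rw [← Finset.add_sum_erase _ _ hk]
  have hz :
      ∑ x ∈ (antidiagonal (2 * k)).erase (k, k),
        PowerSeries.coeff x.1 f * PowerSeries.coeff x.2 f = 0 := by
    have gmem : ∀ x ∈ (antidiagonal (2 * k)).erase (k, k),
        x.swap ∈ (antidiagonal (2 * k)).erase (k, k) := by
      rintro ⟨i, j⟩ hx
      rw [Finset.mem_erase, Finset.HasAntidiagonal.mem_antidiagonal] at hx ⊢
      refine ⟨?_, by simpa [add_comm] using hx.2⟩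
      intro h
      apply hx.1
      have h1 : j = k := (Prod.mk.injEq _ _ _ _).mp h |>.1
      have h2 : i = k := (Prod.mk.injEq _ _ _ _).mp h |>.2
      simp [h1, h2]
    refine Finset.sum_involution (fun x _ => x.swap) ?_ ?_ gmem ?_
    · intro x hx
      simp only [Prod.fst_swap, Prod.snd_swap]
      rw [mul_comm]
      exact addselfR _
    · rintro ⟨i, j⟩ hx hne
      rw [Finset.mem_erase, Finset.HasAntidiagonal.mem_antidiagonal] at hx
      intro hxx
      apply hx.1
      have h1 : j = i := ((Prod.mk.injEq _ _ _ _).mp hxx).1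
      have h2 : i + j = 2 * k := hx.2
      simp only [Prod.mk.injEq]
      omega
    · intro x hx
      simp
  rw [hz, add_zero]


noncomputable def Ws : PowerSeries R := PowerSeries.mk w
noncomputable def We : PowerSeries R := PowerSeries.mk fun n => if Odd n then 0 else w n
noncomputable def Wo : PowerSeries R := PowerSeries.mk fun n => if Odd n then w n else 0

section
variable (ω : R →+* R) (p : ℕ → R)

noncomputable def Om : PowerSeries R := PowerSeries.mk fun n => ω (w n)
noncomputable def Oe : PowerSeries R := PowerSeries.mk fun n => if Odd n then 0 else ω (w n)
noncomputable def Oo : PowerSeries R := PowerSeries.mk fun n => if Odd n then ω (w n) else 0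
noncomputable def Pser : PowerSeries R := PowerSeries.mk fun n => if n = 0 then 0 else p n

lemma splitW : Ws = We + Wo := by
  ext n
  simp only [Ws, We, Wo, coeff_mk, map_add]
  by_cases h : Odd n <;> simp [h]

lemma splitO : Om ω = Oe ω + Oo ω := by
  ext n
  simp only [Om, Oe, Oo, coeff_mk, map_add]
  by_cases h : Odd n <;> simp [h]

variable (hω : ∀ k : ℕ, 1 ≤ k → ∑ i ∈ Finset.range (k + 1), w i * ω (w (k - i)) = 0)
variable (hp : ∀ k : ℕ, 1 ≤ k →
    (k : R) * w k = ∑ j ∈ Finset.range k, p (k - j) * w j)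

include hω in
lemma hunit : Ws * Om ω = 1 := by
  ext n
  rw [PowerSeries.coeff_mul, Finset.Nat.sum_antidiagonal_eq_sum_range_succ_mk]
  simp only [Ws, Om, coeff_mk]
  cases n with
  | zero => simp [w]
  | succ m =>
    rw [hω (m + 1) (by omega)]
    simp [PowerSeries.coeff_one]

lemma coeff_mul_zero (f g : PowerSeries R) (n : ℕ)
    (h : ∀ i j, i + j = n → PowerSeries.coeff i f = 0 ∨ PowerSeries.coeff j g = 0) :
    PowerSeries.coeff n (f * g) = 0 := by
  rw [PowerSeries.coeff_mul]
  apply Finset.sum_eq_zero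
  rintro ⟨i, j⟩ hij
  rw [Finset.HasAntidiagonal.mem_antidiagonal] at hij
  rcases h i j hij with h' | h' <;> simp [h']

lemma par_ee (n : ℕ) (hn : Odd n) : PowerSeries.coeff n (We * Oe ω) = 0 := by
  apply coeff_mul_zero
  intro i j hij
  by_cases hi : Odd i
  · left; simp [We, coeff_mk, hi]
  · right
    have hj : Odd j := by
      rw [Nat.odd_iff] at hn ⊢
      rw [Nat.odd_iff] at hi
      omega
    simp [Oe, coeff_mk, hj]

lemma par_oo (n : ℕ) (hn : Odd n) : PowerSeries.coeff n (Wo * Oo ω) = 0 := by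
  apply coeff_mul_zero
  intro i j hij
  by_cases hi : Odd i
  · right
    have hj : ¬ Odd j := by
      rw [Nat.odd_iff] at hn hi ⊢; omega
    simp [Oo, coeff_mk, hj]
  · left; simp [Wo, coeff_mk, hi]

lemma par_eo (n : ℕ) (hn : ¬ Odd n) : PowerSeries.coeff n (We * Oo ω) = 0 := by
  apply coeff_mul_zero
  intro i j hij
  by_cases hi : Odd i
  · left; simp [We, coeff_mk, hi]
  · right
    have hj : ¬ Odd j := by
      rw [Nat.odd_iff] at hn hi ⊢; omega
    simp [Oo, coeff_mk, hj]

lemma par_oe (n : ℕ) (hn : ¬ Odd n) : PowerSeries.coeff n (Wo * Oe ω) = 0 := by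
  apply coeff_mul_zero
  intro i j hij
  by_cases hi : Odd i
  · right
    have hj : Odd j := by
      rw [Nat.odd_iff] at hn ⊢
      rw [Nat.odd_iff] at hi
      omega
    simp [Oe, coeff_mk, hj]
  · left; simp [Wo, coeff_mk, hi]

include hω in
lemma h_eo : We * Oo ω = Wo * Oe ω := by
  apply PowerSeries.ext; intro n
  by_cases hn : Odd n
  · have h0 : PowerSeries.coeff n (Ws * Om ω) = 0 := by
      rw [hunit ω hω]
      have : n ≠ 0 := by rintro rfl; simp at hn
      simp [PowerSeries.coeff_one, this]
    rw [splitW, splitO ω] at h0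
    have hexp : (We + Wo) * (Oe ω + Oo ω) =
        We * Oe ω + Wo * Oo ω + (We * Oo ω + Wo * Oe ω) := by ring
    rw [hexp, map_add, map_add, map_add, par_ee ω n hn,
      par_oo ω n hn] at h0
    simp only [zero_add, map_add] at h0
    exact eq_of_add_zero_R h0
  · rw [par_eo ω n hn, par_oe ω n hn]

include hω in
lemma key : Wo * Oo ω = (Wo * Om ω) ^ 2 := by
  have h1 := h_eo ω hω
  have h2 : We * Oo ω + Wo * Oe ω = 0 := by rw [h1]; exact addself _
  have hu := hunit ω hω
  calc Wo * Oo ω = Wo * Oo ω * (Ws * Om ω) := by rw [hu, mul_one]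
    _ = Wo * Oo ω * ((We + Wo) * (Oe ω + Oo ω)) := by rw [← splitW, ← splitO]
    _ = Wo * Oe ω * (We * Oo ω) + Wo * Oo ω * (We * Oo ω + Wo * Oe ω)
        + (Wo * Oo ω) ^ 2 := by ring
    _ = (Wo * Oe ω) ^ 2 + (Wo * Oo ω) ^ 2 := by rw [h2, mul_zero, add_zero, h1, ← sq]
    _ = (Wo * Oe ω + Wo * Oo ω) ^ 2 := (addsq _ _).symm
    _ = (Wo * Om ω) ^ 2 := by rw [splitO]; ring_nf

include hp in
lemma hNewton : Wo = Pser p * Ws := by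
  apply PowerSeries.ext; intro n
  rw [PowerSeries.coeff_mul, Finset.Nat.sum_antidiagonal_eq_sum_range_succ_mk]
  simp only [Wo, Pser, Ws, coeff_mk]
  cases n with
  | zero => simp
  | succ m =>
    have hcast : (if Odd (m + 1) then w (m + 1) else 0) = ((m + 1 : ℕ) : R) * w (m + 1) := by
      by_cases h : Odd (m + 1)
      · rw [if_pos h]
        obtain ⟨t, ht⟩ := h
        rw [ht]
        push_cast
        rw [two_zero_R]
        ring
      · rw [if_neg h]
        obtain ⟨t, ht⟩ := Nat.not_odd_iff_even.mp h
        rw [ht]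
        push_cast
        rw [← two_mul, two_zero_R]
        ring
    rw [hcast, hp (m + 1) (by omega)]
    rw [Finset.sum_range_succ' (fun x => (if x = 0 then (0 : R) else p x) * w (m + 1 - x)) (m + 1)]
    rw [← Finset.sum_range_reflect (fun j => p (m + 1 - j) * w j) (m + 1)]
    have h0 : (if (0 : ℕ) = 0 then (0 : R) else p 0) * w (m + 1 - 0) = 0 := by simp
    rw [h0, add_zero]
    apply Finset.sum_congr rfl
    intro j hj
    rw [Finset.mem_range] at hj
    have e1 : m + 1 - 1 - j = m - j := by omega
    have e2 : m + 1 - (m - j) = j + 1 := by omega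
    have e3 : m + 1 - (j + 1) = m - j := by omega
    simp only [e1, e2, e3, if_neg (Nat.succ_ne_zero j)]

include hω hp in
lemma POm : Wo * Om ω = Pser p := by
  rw [hNewton p hp, mul_assoc, hunit ω hω, mul_one]

end

lemma sum_even_extract (g : ℕ → R) (m : ℕ) :
    ∑ i ∈ Finset.range (2 * m), (if Odd i then 0 else g i) = ∑ i ∈ Finset.range m, g (2 * i) := by
  induction m with
  | zero => simp
  | succ t ih =>
    have h2 : 2 * (t + 1) = 2 * t + 1 + 1 := by ring
    rw [h2, Finset.sum_range_succ, Finset.sum_range_succ, Finset.sum_range_succ, ih]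
    have ho : Odd (2 * t + 1) := ⟨t, by ring⟩
    have he : ¬ Odd (2 * t) := by rw [Nat.odd_iff]; omega
    simp [ho, he]

lemma main
    (ω : R →+* R)
    (hω : ∀ k : ℕ, 1 ≤ k → ∑ i ∈ Finset.range (k + 1), w i * ω (w (k - i)) = 0)
    (p : ℕ → R)
    (hp : ∀ k : ℕ, 1 ≤ k →
      (k : R) * w k = ∑ j ∈ Finset.range k, p (k - j) * w j)
    (k : ℕ) (hk : Odd k) :
    p k ^ 2 =
      ∑ i ∈ Finset.range ((k - 1) / 2 + 1),
        ((w (2 * i) * w (2 * (k - i)) + ω (w (2 * i) * w (2 * (k - i)))) +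
          (w (2 * i) + ω (w (2 * i))) * (w (2 * (k - i)) + ω (w (2 * (k - i))))) := by
  classical
  obtain ⟨s, hs⟩ := hk
  have hk1 : 1 ≤ k := by omega
  have hkne : ¬ k = 0 := by omega
  have e1 : p k ^ 2 = PowerSeries.coeff (2 * k) ((Wo * Om ω) ^ 2) := by
    rw [coeff_sq, POm ω p hω hp]
    simp only [Pser, coeff_mk, if_neg hkne]
  rw [e1, ← key ω hω]
  have hnotodd : ¬ Odd (2 * k) := by rw [Nat.odd_iff]; omega
  have e2 : PowerSeries.coeff (2 * k) (Wo * Oo ω) =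
      PowerSeries.coeff (2 * k) (We * Oe ω) := by
    have h0 : PowerSeries.coeff (2 * k) (Ws * Om ω) = 0 := by
      rw [hunit ω hω]
      simp [PowerSeries.coeff_one, hkne]
    rw [splitW, splitO ω] at h0
    have hexp : (We + Wo) * (Oe ω + Oo ω) =
        We * Oo ω + Wo * Oe ω + (We * Oe ω + Wo * Oo ω) := by ring
    rw [hexp, map_add, map_add, map_add, par_eo ω _ hnotodd, par_oe ω _ hnotodd] at h0
    simp only [zero_add, map_add] at h0
    exact (eq_of_add_zero_R h0).symm
  rw [e2]
  rw [PowerSeries.coeff_mul, Finset.Nat.sum_antidiagonal_eq_sum_range_succ_mk]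
  simp only [We, Oe, coeff_mk]
  have e3 : ∀ i ∈ Finset.range (2 * k + 1),
      (if Odd i then 0 else w i) * (if Odd (2 * k - i) then 0 else ω (w (2 * k - i)))
        = (if Odd i then 0 else w i * ω (w (2 * k - i))) := by
    intro i hi
    rw [Finset.mem_range] at hi
    by_cases h : Odd i
    · simp [h]
    · have h2 : ¬ Odd (2 * k - i) := by
        rw [Nat.odd_iff] at h ⊢; omega
      simp [h, h2]
  rw [Finset.sum_congr rfl e3]
  have e4 : ∑ i ∈ Finset.range (2 * (k + 1)), (if Odd i then 0 else w i * ω (w (2 * k - i)))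
      = ∑ i ∈ Finset.range (2 * k + 1), (if Odd i then 0 else w i * ω (w (2 * k - i))) := by
    rw [show 2 * (k + 1) = (2 * k + 1) + 1 by ring, Finset.sum_range_succ]
    have : Odd (2 * k + 1) := ⟨k, by ring⟩
    simp [this]
  rw [← e4, sum_even_extract (fun i => w i * ω (w (2 * k - i))) (k + 1)]
  have hdiv : (k - 1) / 2 = s := by omega
  rw [hdiv]
  rw [show Finset.range (k + 1) = Finset.range ((s + 1) + (s + 1)) from by
    rw [show k + 1 = (s + 1) + (s + 1) by omega]]
  rw [Finset.sum_range_add]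
  rw [← Finset.sum_range_reflect
    (fun i => w (2 * (s + 1 + i)) * ω (w (2 * k - 2 * (s + 1 + i)))) (s + 1)]
  rw [← Finset.sum_add_distrib]
  apply Finset.sum_congr rfl
  intro i hi
  rw [Finset.mem_range] at hi
  have e5 : 2 * k - 2 * i = 2 * (k - i) := by omega
  have e6 : s + 1 + (s + 1 - 1 - i) = k - i := by omega
  have e7 : 2 * k - 2 * (k - i) = 2 * i := by omega
  simp only [e5, e6, e7]
  rw [map_mul]
  linear_combination
    (-(w (2 * i) * w (2 * (k - i)) + ω (w (2 * i)) * ω (w (2 * (k - i))))) * two_zero_R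

end PSqAux


/-- In `R = 𝔽₂[w₁, w₂, …]` with the involution `ω` given by
`∑_{i=0}^{k} wᵢ · ω (w_{k-i}) = 0`, `d x = x + ω x`, and the power sums `p_k` given by
the Newton identities: for every odd `k ≥ 1`,
`p_k² = ∑_{i=0}^{(k-1)/2} [ d (w_{2i} · w_{2(k-i)}) + d (w_{2i}) · d (w_{2(k-i)}) ]`. -/
theorem p_sq_formula
    (ω : MvPolynomial ℕ (ZMod 2) →+* MvPolynomial ℕ (ZMod 2))
    (hω : ∀ k : ℕ, 1 ≤ k → ∑ i ∈ Finset.range (k + 1), w i * ω (w (k - i)) = 0)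
    (p : ℕ → MvPolynomial ℕ (ZMod 2))
    (hp : ∀ k : ℕ, 1 ≤ k →
      (k : MvPolynomial ℕ (ZMod 2)) * w k = ∑ j ∈ Finset.range k, p (k - j) * w j)
    (k : ℕ) (hk : Odd k) :
    p k ^ 2 =
      ∑ i ∈ Finset.range ((k - 1) / 2 + 1),
        ((w (2 * i) * w (2 * (k - i)) + ω (w (2 * i) * w (2 * (k - i)))) +
          (w (2 * i) + ω (w (2 * i))) * (w (2 * (k - i)) + ω (w (2 * (k - i))))) := PSqAux.main ω hω p hp k hk
end

section
/- In R = F_2[w₁, w₂, ...] with involution ω, power sums p_k, and d(x) = x + ω(x), for every k ≥ 1: w_{2k}² = w_{2k}·d(w_{2k}) + p_k⁴ + Σ_{i=0}^{k-1} [ d(w_{2i}·w_{4k-2i}) + d(w_{2i})·d(w_{4k-2i}) ]. -/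
open Finset

namespace WuAux

abbrev R2 : Type := MvPolynomial ℕ (ZMod 2)

lemma two_eq_zero : (2 : R2) = 0 := by
  have := CharP.cast_eq_zero R2 2
  exact_mod_cast this

lemma add_self (a : R2) : a + a = 0 := by
  have h : (2:R2) * a = 0 := by rw [two_eq_zero]; ring
  linear_combination h

lemma natCast_parity (j : ℕ) : (j : R2) = if Even j then 0 else 1 := by
  rcases Nat.even_or_odd j with ⟨m, rfl⟩ | ⟨m, rfl⟩
  · rw [if_pos ⟨m, rfl⟩]
    push_cast
    linear_combination (m : R2) * two_eq_zero
  · rw [if_neg (by simpa using (Nat.not_even_iff_odd).mpr ⟨m, rfl⟩)]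
    push_cast
    linear_combination (m : R2) * two_eq_zero

lemma split_sum {M : Type*} [AddCommMonoid M] (F : ℕ → M) (k : ℕ) :
    ∑ i ∈ range (2*k+1), F i
      = ((∑ i ∈ range k, F i) + ∑ i ∈ range k, F (2*k - i)) + F k := by
  have h1 : ∑ i ∈ range (k+1), F i + ∑ i ∈ Ico (k+1) (2*k+1), F i
      = ∑ i ∈ range (2*k+1), F i := by
    rw [range_eq_Ico, range_eq_Ico]
    exact Finset.sum_Ico_consecutive F (show 0 ≤ k+1 by omega) (show k+1 ≤ 2*k+1 by omega)
  have h2 : ∑ i ∈ Ico (k+1) (2*k+1), F i = ∑ i ∈ range k, F (k+1+i) := by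
    rw [Finset.sum_Ico_eq_sum_range]
    have e : 2*k+1 - (k+1) = k := by omega
    rw [e]
  have h3 : ∑ i ∈ range k, F (k+1+i) = ∑ i ∈ range k, F (2*k - i) := by
    rw [← Finset.sum_range_reflect (fun i => F (k+1+i)) k]
    apply Finset.sum_congr rfl
    intro i hi
    simp only [mem_range] at hi
    congr 1
    omega
  rw [← h1, h2, h3, Finset.sum_range_succ]
  abel

lemma split_sum_even {M : Type*} [AddCommMonoid M] (F : ℕ → M) (k : ℕ) :
    ∑ i ∈ range (2*k), F i = ∑ i ∈ range k, (F i + F (2*k - 1 - i)) := by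
  have h1 : ∑ i ∈ range k, F i + ∑ i ∈ Ico k (2*k), F i
      = ∑ i ∈ range (2*k), F i := by
    rw [range_eq_Ico, range_eq_Ico]
    exact Finset.sum_Ico_consecutive F (show 0 ≤ k by omega) (show k ≤ 2*k by omega)
  have h2 : ∑ i ∈ Ico k (2*k), F i = ∑ i ∈ range k, F (k+i) := by
    rw [Finset.sum_Ico_eq_sum_range]
    have e : 2*k - k = k := by omega
    rw [e]
  have h3 : ∑ i ∈ range k, F (k+i) = ∑ i ∈ range k, F (2*k - 1 - i) := by
    rw [← Finset.sum_range_reflect (fun i => F (k+i)) k]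
    apply Finset.sum_congr rfl
    intro i hi
    simp only [mem_range] at hi
    congr 1
    omega
  rw [← h1, h2, h3, Finset.sum_add_distrib]

lemma sum_even_extract {M : Type*} [AddCommMonoid M] (f : ℕ → M) (n : ℕ) :
    ∑ j ∈ range (2*n+1), (if Even j then f j else 0) = ∑ i ∈ range (n+1), f (2*i) := by
  induction n with
  | zero => simp
  | succ n ih =>
      have he : ¬ Even (2*n+1) := by simp [Nat.even_add_one, parity_simps]
      have he2 : Even (2*n+1+1) := by simpa [Nat.even_add_one] using he
      rw [show 2*(n+1)+1 = (2*n+1) + 1 + 1 from by omega,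
        Finset.sum_range_succ, Finset.sum_range_succ, ih, if_neg he, if_pos he2,
        show 2*n+1+1 = 2*(n+1) from by omega,
        Finset.sum_range_succ (fun i => f (2*i)) (n+1)]
      abel

lemma coeff_sq_even (f : PowerSeries R2) (n : ℕ) :
    PowerSeries.coeff (2*n) (f * f) = (PowerSeries.coeff n f)^2 := by
  rw [PowerSeries.coeff_mul, Finset.Nat.sum_antidiagonal_eq_sum_range_succ_mk]
  rw [show (2*n).succ = 2*n + 1 from rfl,
    split_sum (fun i => PowerSeries.coeff i f * PowerSeries.coeff (2*n - i) f) n]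
  have hz : ∑ i ∈ range n,
      (PowerSeries.coeff i f * PowerSeries.coeff (2*n - i) f)
      + ∑ i ∈ range n,
      (PowerSeries.coeff (2*n - i) f * PowerSeries.coeff (2*n - (2*n - i)) f) = 0 := by
    rw [← Finset.sum_add_distrib]
    apply Finset.sum_eq_zero
    intro i hi
    simp only [mem_range] at hi
    rw [show 2*n - (2*n - i) = i from by omega, mul_comm]
    exact add_self _
  rw [hz, show 2*n - n = n from by omega]
  ring

lemma coeff_sq_odd (f : PowerSeries R2) (m : ℕ) (hm : ¬ Even m) :
    PowerSeries.coeff m (f * f) = 0 := by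
  obtain ⟨n, rfl⟩ : ∃ n, m = 2*n+1 := by
    rcases Nat.even_or_odd m with h | ⟨n, hn⟩
    · exact absurd h hm
    · exact ⟨n, hn⟩
  rw [PowerSeries.coeff_mul, Finset.Nat.sum_antidiagonal_eq_sum_range_succ_mk]
  rw [show (2*n+1).succ = 2*(n+1) from by omega,
    split_sum_even (fun i => PowerSeries.coeff i f * PowerSeries.coeff (2*n+1 - i) f) (n+1)]
  apply Finset.sum_eq_zero
  intro i hi
  simp only [mem_range] at hi
  rw [show 2*(n+1) - 1 - i = 2*n+1-i from by omega,
    show 2*n+1 - (2*n+1-i) = i from by omega, mul_comm]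
  exact add_self _

noncomputable def Wser : PowerSeries R2 := PowerSeries.mk w
noncomputable def Wbser (ω : R2 →+* R2) : PowerSeries R2 := PowerSeries.mk (fun n => ω (w n))
noncomputable def Woser : PowerSeries R2 := PowerSeries.mk (fun n => (n : R2) * w n)
noncomputable def Pser (p : ℕ → R2) : PowerSeries R2 :=
  PowerSeries.mk (fun n => if n = 0 then 0 else p n)

lemma hWWb (ω : R2 →+* R2)
    (hω : ∀ k : ℕ, 1 ≤ k → ∑ i ∈ Finset.range (k + 1), w i * ω (w (k - i)) = 0) :
    Wser * Wbser ω = 1 := by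
  refine PowerSeries.ext fun n => ?_
  rw [PowerSeries.coeff_mul, Finset.Nat.sum_antidiagonal_eq_sum_range_succ_mk,
    PowerSeries.coeff_one]
  simp only [Wser, Wbser, PowerSeries.coeff_mk]
  rcases Nat.eq_zero_or_pos n with rfl | hn
  · simp [w]
  · rw [if_neg (by omega), show n.succ = n + 1 from rfl]
    exact hω n hn

lemma hWo (p : ℕ → R2)
    (hp : ∀ k : ℕ, 1 ≤ k → (k : R2) * w k = ∑ j ∈ Finset.range k, p (k - j) * w j) :
    Woser = Pser p * Wser := by
  refine PowerSeries.ext fun n => ?_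
  rw [PowerSeries.coeff_mul, Finset.Nat.sum_antidiagonal_eq_sum_range_succ_mk]
  simp only [Woser, Pser, Wser, PowerSeries.coeff_mk]
  rcases Nat.eq_zero_or_pos n with rfl | hn
  · simp
  · rw [show n.succ = n + 1 from rfl,
      Finset.sum_range_succ' (fun i => (if i = 0 then 0 else p i) * w (n - i)) n]
    simp only [Nat.succ_ne_zero, if_false, if_pos rfl, zero_mul, add_zero, ite_false]
    rw [if_pos trivial, zero_mul, add_zero]
    rw [hp n hn, ← Finset.sum_range_reflect (fun j => p (n - j) * w j) n]
    apply Finset.sum_congr rfl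
    intro i hi
    simp only [mem_range] at hi
    congr 2 <;> omega

lemma hP (ω : R2 →+* R2)
    (hω : ∀ k : ℕ, 1 ≤ k → ∑ i ∈ Finset.range (k + 1), w i * ω (w (k - i)) = 0)
    (p : ℕ → R2)
    (hp : ∀ k : ℕ, 1 ≤ k → (k : R2) * w k = ∑ j ∈ Finset.range k, p (k - j) * w j) :
    Pser p = Woser * Wbser ω := by
  rw [hWo p hp, mul_assoc, hWWb ω hω, mul_one]

lemma pA (ω : R2 →+* R2)
    (hω : ∀ k : ℕ, 1 ≤ k → ∑ i ∈ Finset.range (k + 1), w i * ω (w (k - i)) = 0)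
    (p : ℕ → R2)
    (hp : ∀ k : ℕ, 1 ≤ k → (k : R2) * w k = ∑ j ∈ Finset.range k, p (k - j) * w j)
    (n : ℕ) (hn : 1 ≤ n) :
    p n = ∑ i ∈ range (n+1), (i : R2) * w i * ω (w (n - i)) := by
  have h := congrArg (PowerSeries.coeff n) (hP ω hω p hp)
  rw [PowerSeries.coeff_mul, Finset.Nat.sum_antidiagonal_eq_sum_range_succ_mk] at h
  simp only [Pser, Woser, Wbser, PowerSeries.coeff_mk, if_neg (by omega : ¬ n = 0)] at h
  rw [h, show n.succ = n + 1 from rfl]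

section Q
variable (p : ℕ → R2)
    (hp : ∀ k : ℕ, 1 ≤ k → (k : R2) * w k = ∑ j ∈ Finset.range k, p (k - j) * w j)

lemma hQprod (hp : ∀ k : ℕ, 1 ≤ k → (k : R2) * w k = ∑ j ∈ Finset.range k, p (k - j) * w j) :
    (Pser p + Pser p * Pser p) * (Wser * Wser) = Woser * (Wser + Woser) := by
  rw [hWo p hp]; ring

lemma coeff_rhs_even (n : ℕ) :
    PowerSeries.coeff (2*n) (Woser * (Wser + Woser)) = 0 := by
  rw [PowerSeries.coeff_mul, Finset.Nat.sum_antidiagonal_eq_sum_range_succ_mk]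
  apply Finset.sum_eq_zero
  intro i hi
  simp only [mem_range] at hi
  simp only [Woser, Wser, PowerSeries.coeff_mk, map_add, PowerSeries.coeff_mk]
  rcases Nat.even_or_odd i with he | ho
  · rw [natCast_parity i, if_pos he]; ring
  · have hj : ¬ Even (2*n - i) := by
      rcases ho with ⟨m, rfl⟩
      rcases Nat.even_or_odd (2*n - (2*m+1)) with ⟨l, hl⟩ | hodd
      · omega
      · exact Nat.not_even_iff_odd.mpr hodd
    rw [natCast_parity (2*n - i), if_neg hj, natCast_parity i,
      if_neg (Nat.not_even_iff_odd.mpr ho)]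
    have : w (2*n-i) + 1 * w (2*n-i) = 0 := by
      rw [one_mul]; exact add_self _
    rw [this, mul_zero]

lemma q_rec (hp : ∀ k : ℕ, 1 ≤ k → (k : R2) * w k = ∑ j ∈ Finset.range k, p (k - j) * w j)
    (n : ℕ) :
    PowerSeries.coeff (2*n) (Pser p + Pser p * Pser p)
      = ∑ a ∈ range n,
          PowerSeries.coeff (2*a) (Pser p + Pser p * Pser p) * (w (n - a))^2 := by
  set Q := Pser p + Pser p * Pser p with hQdef
  have h0 : PowerSeries.coeff (2*n) (Q * (Wser * Wser)) = 0 := by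
    rw [hQprod p hp]; exact coeff_rhs_even n
  rw [PowerSeries.coeff_mul, Finset.Nat.sum_antidiagonal_eq_sum_range_succ_mk] at h0
  have h1 : ∀ i ∈ range ((2*n).succ),
      PowerSeries.coeff i Q * PowerSeries.coeff (2*n - i) (Wser * Wser)
        = if Even i then PowerSeries.coeff i Q * PowerSeries.coeff (2*n - i) (Wser * Wser) else 0 := by
    intro i hi
    simp only [mem_range] at hi
    rcases Nat.even_or_odd i with he | ho
    · rw [if_pos he]
    · rw [if_neg (Nat.not_even_iff_odd.mpr ho)]
      have hj : ¬ Even (2*n - i) := by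
        rcases ho with ⟨m, rfl⟩
        rcases Nat.even_or_odd (2*n - (2*m+1)) with ⟨l, hl⟩ | hodd
        · omega
        · exact Nat.not_even_iff_odd.mpr hodd
      rw [coeff_sq_odd _ _ hj, mul_zero]
  rw [Finset.sum_congr rfl h1] at h0
  rw [show (2*n).succ = 2*n+1 from rfl,
    sum_even_extract (fun j => PowerSeries.coeff j Q * PowerSeries.coeff (2*n - j) (Wser * Wser)) n]
    at h0
  have h2 : ∀ a ∈ range (n+1),
      PowerSeries.coeff (2*a) Q * PowerSeries.coeff (2*n - 2*a) (Wser * Wser)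
        = PowerSeries.coeff (2*a) Q * (w (n-a))^2 := by
    intro a ha
    simp only [mem_range] at ha
    rw [show 2*n - 2*a = 2*(n-a) from by omega, coeff_sq_even]
    simp [Wser, PowerSeries.coeff_mk]
  rw [Finset.sum_congr rfl h2, Finset.sum_range_succ] at h0
  have h3 : PowerSeries.coeff (2*n) Q * (w (n-n))^2 = PowerSeries.coeff (2*n) Q := by
    rw [show n - n = 0 from by omega, show w 0 = 1 from rfl]
    ring
  rw [h3] at h0
  linear_combination h0 - (∑ a ∈ range n, PowerSeries.coeff (2*a) Q * (w (n-a))^2) * two_eq_zero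

lemma q_zero (hp : ∀ k : ℕ, 1 ≤ k → (k : R2) * w k = ∑ j ∈ Finset.range k, p (k - j) * w j)
    (n : ℕ) :
    PowerSeries.coeff (2*n) (Pser p + Pser p * Pser p) = 0 := by
  induction n using Nat.strong_induction_on with
  | _ n ih =>
      rw [q_rec p hp n]
      apply Finset.sum_eq_zero
      intro a ha
      simp only [mem_range] at ha
      rw [ih a ha, zero_mul]

lemma p_double (hp : ∀ k : ℕ, 1 ≤ k → (k : R2) * w k = ∑ j ∈ Finset.range k, p (k - j) * w j)
    (n : ℕ) (hn : 1 ≤ n) : p (2*n) = p n ^ 2 := by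
  have h := q_zero p hp n
  rw [map_add, coeff_sq_even] at h
  simp only [Pser, PowerSeries.coeff_mk, if_neg (by omega : ¬ 2*n = 0),
    if_neg (by omega : ¬ n = 0)] at h
  linear_combination h - (p n ^ 2) * two_eq_zero

lemma p_four (hp : ∀ k : ℕ, 1 ≤ k → (k : R2) * w k = ∑ j ∈ Finset.range k, p (k - j) * w j)
    (k : ℕ) (hk : 1 ≤ k) : p (4*k) = p k ^ 4 := by
  have h1 := p_double p hp (2*k) (by omega)
  have h2 := p_double p hp k hk
  rw [show 2*(2*k) = 4*k from by omega, h2] at h1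
  rw [h1]; ring

end Q

end WuAux

open WuAux in
/-- In `R = 𝔽₂[w₁, w₂, …]` with the involution `ω` given by
`∑_{i=0}^{k} wᵢ · ω (w_{k-i}) = 0`, `d x = x + ω x`, and the power sums `p_k` given by
the Newton identities: for every `k ≥ 1`,
`w_{2k}² = w_{2k} · d (w_{2k}) + p_k⁴ + ∑_{i=0}^{k-1} [ d (w_{2i} · w_{4k-2i}) + d (w_{2i}) · d (w_{4k-2i}) ]`. -/
theorem w_two_k_sq_formula
    (ω : MvPolynomial ℕ (ZMod 2) →+* MvPolynomial ℕ (ZMod 2))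
    (hω : ∀ k : ℕ, 1 ≤ k → ∑ i ∈ Finset.range (k + 1), w i * ω (w (k - i)) = 0)
    (p : ℕ → MvPolynomial ℕ (ZMod 2))
    (hp : ∀ k : ℕ, 1 ≤ k →
      (k : MvPolynomial ℕ (ZMod 2)) * w k = ∑ j ∈ Finset.range k, p (k - j) * w j)
    (k : ℕ) (hk : 1 ≤ k) :
    w (2 * k) ^ 2 =
      w (2 * k) * (w (2 * k) + ω (w (2 * k))) + p k ^ 4 +
        ∑ i ∈ Finset.range k,
          ((w (2 * i) * w (4 * k - 2 * i) + ω (w (2 * i) * w (4 * k - 2 * i))) +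
            (w (2 * i) + ω (w (2 * i))) * (w (4 * k - 2 * i) + ω (w (4 * k - 2 * i)))) := by
  set S : R2 := ∑ i ∈ range k, (w (2*i) * ω (w (4*k - 2*i)) + ω (w (2*i)) * w (4*k - 2*i))
    with hSdef
  -- Step 1: the big sum equals S
  have h1 : ∑ i ∈ Finset.range k,
      ((w (2 * i) * w (4 * k - 2 * i) + ω (w (2 * i) * w (4 * k - 2 * i))) +
        (w (2 * i) + ω (w (2 * i))) * (w (4 * k - 2 * i) + ω (w (4 * k - 2 * i)))) = S := by
    rw [hSdef]
    apply Finset.sum_congr rfl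
    intro i _
    rw [map_mul]
    linear_combination (w (2*i) * w (4*k - 2*i) + ω (w (2*i)) * ω (w (4*k - 2*i))) * two_eq_zero
  -- Step 2: T = p (4k)
  have h3 : w (2*k) * ω (w (2*k)) + S = p (4*k) := by
    have hT : (∑ i ∈ range (2*k+1), w (2*i) * ω (w (4*k - 2*i)))
        = S + w (2*k) * ω (w (2*k)) := by
      rw [split_sum (fun i => w (2*i) * ω (w (4*k - 2*i))) k, hSdef]
      rw [show 4*k - 2*k = 2*k from by omega]
      congr 1
      rw [← Finset.sum_add_distrib]
      apply Finset.sum_congr rfl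
      intro i hi
      simp only [mem_range] at hi
      rw [show 2*(2*k - i) = 4*k - 2*i from by omega,
        show 4*k - (4*k - 2*i) = 2*i from by omega]
      ring
    have hEx : (∑ j ∈ range (4*k+1), (if Even j then w j * ω (w (4*k - j)) else 0))
        = ∑ i ∈ range (2*k+1), w (2*i) * ω (w (4*k - 2*i)) := by
      have := sum_even_extract (fun j => w j * ω (w (4*k - j))) (2*k)
      rw [show 2*(2*k)+1 = 4*k+1 from by omega] at this
      exact this
    have hOdd : p (4*k) = ∑ i ∈ range (4*k+1), (i : R2) * w i * ω (w (4*k - i)) :=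
      pA ω hω p hp (4*k) (by omega)
    have hFull : (∑ j ∈ range (4*k+1), w j * ω (w (4*k - j))) = 0 := hω (4*k) (by omega)
    have hcomb : (∑ j ∈ range (4*k+1), (if Even j then w j * ω (w (4*k - j)) else 0))
        + ∑ i ∈ range (4*k+1), (i : R2) * w i * ω (w (4*k - i))
        = ∑ j ∈ range (4*k+1), w j * ω (w (4*k - j)) := by
      rw [← Finset.sum_add_distrib]
      apply Finset.sum_congr rfl
      intro j _
      rw [natCast_parity j]
      rcases Nat.even_or_odd j with he | ho
      · rw [if_pos he, if_pos he]; ring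
      · rw [if_neg (Nat.not_even_iff_odd.mpr ho), if_neg (Nat.not_even_iff_odd.mpr ho)]; ring
    rw [hEx, hT, ← hOdd, hFull] at hcomb
    linear_combination hcomb - (p (4*k)) * two_eq_zero
  have h2 : p k ^ 4 = p (4*k) := (p_four p hp k hk).symm
  linear_combination -h1 - h2 - h3 - (p (4*k)) * two_eq_zero
end

section
/- Let V be a finite-dimensional vector space over F_2 of dimension n, and let e ∈ Λⁿ(V) be the nonzero top exterior form. Then every nonzero element x of the exterior algebra Λ(V) divides e: there exists y ∈ Λ(V) with x ∧ y = e. -/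
open MvPolynomial Finset

set_option maxHeartbeats 1000000
set_option synthInstance.maxHeartbeats 200000

namespace AllDivideAux

variable {n : ℕ}

noncomputable section

variable (n) in
/-- The ideal generated by squares of variables. -/
def Isq : Ideal (MvPolynomial (Fin n) (ZMod 2)) :=
  Ideal.span (Set.range fun i : Fin n => (X i : MvPolynomial (Fin n) (ZMod 2)) ^ 2)

variable (n) in
/-- The model ring `𝔽₂[X₁,…,Xₙ]/(Xᵢ²)`. -/
abbrev Qr := MvPolynomial (Fin n) (ZMod 2) ⧸ Isq n

/-- The squarefree exponent vector of a finset. -/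
def msq (S : Finset (Fin n)) : Fin n →₀ ℕ := ∑ i ∈ S, Finsupp.single i 1

lemma msq_apply (S : Finset (Fin n)) (j : Fin n) : msq S j = if j ∈ S then 1 else 0 := by
  classical
  rw [msq, Finset.sum_apply']
  simp [Finsupp.single_apply]

lemma msq_injective : Function.Injective (msq (n := n)) := by
  intro S T h
  ext i
  have := congrArg (fun f => f i) h
  simp only [msq_apply] at this
  by_cases hS : i ∈ S <;> by_cases hT : i ∈ T <;> simp_all

lemma msq_union {S T : Finset (Fin n)} (h : Disjoint S T) : msq (S ∪ T) = msq S + msq T :=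
  Finset.sum_union h

lemma coeff_eq_zero_of_mem_Isq {p : MvPolynomial (Fin n) (ZMod 2)} (hp : p ∈ Isq n)
    (S : Finset (Fin n)) : coeff (msq S) p = 0 := by
  classical
  rw [Isq, Ideal.mem_span_range_iff_exists_fun] at hp
  obtain ⟨c, rfl⟩ := hp
  rw [coeff_sum]
  refine Finset.sum_eq_zero fun i _ => ?_
  rw [pow_two, ← mul_assoc, coeff_mul_X']
  split_ifs with h
  · rw [coeff_mul_X', if_neg]
    intro hmem
    rw [Finsupp.mem_support_iff, Finsupp.tsub_apply, Finsupp.single_eq_same] at hmem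
    have h1 := msq_apply S i
    have h2 : msq S i ≤ 1 := by split_ifs at h1 <;> omega
    omega
  · rfl

/-- The monomial basis elements of the model ring. -/
def dmon (S : Finset (Fin n)) : Qr n :=
  Ideal.Quotient.mkₐ (ZMod 2) (Isq n) (monomial (msq S) 1)

lemma dmon_mul_disjoint {S T : Finset (Fin n)} (h : Disjoint S T) :
    dmon S * dmon T = dmon (S ∪ T) := by
  rw [dmon, dmon, dmon, ← map_mul, monomial_mul, one_mul, msq_union h]

lemma monomial_mem_Isq {u : Fin n →₀ ℕ} {i : Fin n} (h : 2 ≤ u i) :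
    (monomial u 1 : MvPolynomial (Fin n) (ZMod 2)) ∈ Isq n := by
  have h1 : (monomial u (1 : ZMod 2)) = X i ^ 2 * monomial (u - Finsupp.single i 2) 1 := by
    rw [X_pow_eq_monomial, monomial_mul, one_mul,
      add_tsub_cancel_of_le (Finsupp.single_le_iff.mpr h)]
  rw [h1]
  exact Ideal.mul_mem_right _ _ (Ideal.subset_span ⟨i, rfl⟩)

lemma dmon_mul_not_disjoint {S T : Finset (Fin n)} (h : ¬ Disjoint S T) :
    dmon S * dmon T = 0 := by
  obtain ⟨i, hiS, hiT⟩ := Finset.not_disjoint_iff.mp h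
  rw [dmon, dmon, ← map_mul, monomial_mul, one_mul]
  rw [Ideal.Quotient.mkₐ_eq_mk, Ideal.Quotient.eq_zero_iff_mem]
  refine monomial_mem_Isq (i := i) ?_
  have h1 := msq_apply S i
  have h2 := msq_apply T i
  rw [if_pos hiS] at h1
  rw [if_pos hiT] at h2
  rw [Finsupp.add_apply]
  omega

lemma dmon_mem_span (u : Fin n →₀ ℕ) (c : ZMod 2) :
    Ideal.Quotient.mkₐ (ZMod 2) (Isq n) (monomial u c) ∈
      Submodule.span (ZMod 2) (Set.range (dmon (n := n))) := by
  classical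
  by_cases h : ∀ i, u i ≤ 1
  · have hu : msq u.support = u := by
      ext i
      rw [msq_apply]
      have h2 := Finsupp.mem_support_iff (f := u) (a := i)
      split_ifs with h1
      · have := h2.mp h1; have := h i; omega
      · by_contra h3
        exact h1 (h2.mpr (by omega))
    have : (monomial u c : MvPolynomial (Fin n) (ZMod 2)) = c • monomial u 1 := by
      rw [smul_monomial, smul_eq_mul, mul_one]
    rw [this, map_smul]
    refine Submodule.smul_mem _ _ (Submodule.subset_span ⟨u.support, ?_⟩)
    rw [dmon, hu]
  · push_neg at h
    obtain ⟨i, hi⟩ := h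
    have : (monomial u c : MvPolynomial (Fin n) (ZMod 2)) = c • monomial u 1 := by
      rw [smul_monomial, smul_eq_mul, mul_one]
    rw [this, map_smul, Ideal.Quotient.mkₐ_eq_mk, Ideal.Quotient.eq_zero_iff_mem.mpr
      (monomial_mem_Isq (i := i) (by omega))]
    simp

lemma span_dmon : Submodule.span (ZMod 2) (Set.range (dmon (n := n))) = ⊤ := by
  classical
  rw [eq_top_iff]
  rintro x -
  obtain ⟨p, rfl⟩ := Ideal.Quotient.mk_surjective (I := Isq n) x
  have : Ideal.Quotient.mk (Isq n) p = Ideal.Quotient.mkₐ (ZMod 2) (Isq n) p := rfl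
  rw [this, ← p.support_sum_monomial_coeff, map_sum]
  exact Submodule.sum_mem _ fun u _ => dmon_mem_span u _

lemma dmon_li : LinearIndependent (ZMod 2) (dmon (n := n)) := by
  classical
  rw [Fintype.linearIndependent_iff]
  intro c hc S
  have hmem : (∑ T : Finset (Fin n), c T • monomial (msq T) (1 : ZMod 2)) ∈ Isq n := by
    rw [← Ideal.Quotient.eq_zero_iff_mem]
    have : Ideal.Quotient.mk (Isq n) (∑ T : Finset (Fin n), c T • monomial (msq T) (1 : ZMod 2))
        = Ideal.Quotient.mkₐ (ZMod 2) (Isq n)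
          (∑ T : Finset (Fin n), c T • monomial (msq T) (1 : ZMod 2)) := rfl
    rw [this, map_sum]
    simpa only [map_smul, dmon] using hc
  have h2 := coeff_eq_zero_of_mem_Isq hmem S
  rw [coeff_sum] at h2
  have h3 : ∀ T : Finset (Fin n), T ∈ Finset.univ →
      coeff (msq S) (c T • monomial (msq T) (1 : ZMod 2)) = if T = S then c T else 0 := by
    intro T _
    rw [coeff_smul, coeff_monomial]
    by_cases h : T = S
    · simp [h]
    · rw [if_neg (fun hh => h (msq_injective hh)), if_neg h, smul_zero]
  rw [Finset.sum_congr rfl h3, Finset.sum_ite_eq' Finset.univ S c, if_pos (Finset.mem_univ S)]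
    at h2
  exact h2

variable (n) in
/-- The monomial basis of the model ring. -/
def Bq : Module.Basis (Finset (Fin n)) (ZMod 2) (Qr n) :=
  Module.Basis.mk dmon_li (by rw [span_dmon])

lemma Bq_apply (S : Finset (Fin n)) : Bq n S = dmon S := Module.Basis.mk_apply _ _ _

lemma repr_dmon (S T : Finset (Fin n)) :
    (Bq n).repr (dmon S) T = if S = T then 1 else 0 := by
  rw [← Bq_apply, (Bq n).repr_self, Finsupp.single_apply]

lemma repr_mul_single (i : Fin n) (U : Finset (Fin n)) (z : Qr n) :
    (Bq n).repr (z * dmon {i}) U =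
      if i ∈ U then (Bq n).repr z (U.erase i) else 0 := by
  classical
  have key : (Finsupp.lapply U ∘ₗ ((Bq n).repr.toLinearMap ∘ₗ
        LinearMap.mulRight (ZMod 2) (dmon {i})))
      = (if i ∈ U then Finsupp.lapply (U.erase i) ∘ₗ (Bq n).repr.toLinearMap else 0) := by
    refine (Bq n).ext fun T => ?_
    rw [Bq_apply]
    simp only [LinearMap.coe_comp, LinearEquiv.coe_coe, Function.comp_apply,
      LinearMap.mulRight_apply, Finsupp.lapply_apply]
    by_cases hiU : i ∈ U
    · rw [if_pos hiU]
      simp only [LinearMap.coe_comp, LinearEquiv.coe_coe, Function.comp_apply,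
        Finsupp.lapply_apply]
      by_cases hiT : i ∈ T
      · rw [dmon_mul_not_disjoint
            (Finset.not_disjoint_iff.mpr ⟨i, hiT, Finset.mem_singleton_self i⟩),
          map_zero, repr_dmon, if_neg (fun h : T = U.erase i => (Finset.notMem_erase i U) (h ▸ hiT)),
          Finsupp.coe_zero, Pi.zero_apply]
      · rw [dmon_mul_disjoint (Finset.disjoint_singleton_right.mpr hiT), repr_dmon, repr_dmon]
        by_cases hTU : T ∪ {i} = U
        · rw [if_pos hTU, if_pos]
          rw [← hTU, Finset.union_comm, ← Finset.insert_eq, Finset.erase_insert hiT]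
        · rw [if_neg hTU, if_neg]
          intro h
          exact hTU (by rw [h, Finset.union_comm, ← Finset.insert_eq, Finset.insert_erase hiU])
    · rw [if_neg hiU, LinearMap.zero_apply]
      by_cases hiT : i ∈ T
      · rw [dmon_mul_not_disjoint
            (Finset.not_disjoint_iff.mpr ⟨i, hiT, Finset.mem_singleton_self i⟩),
          map_zero, Finsupp.coe_zero, Pi.zero_apply]
      · rw [dmon_mul_disjoint (Finset.disjoint_singleton_right.mpr hiT), repr_dmon, if_neg]
        intro h
        exact hiU (h ▸ Finset.mem_union_right T (Finset.mem_singleton_self i))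
  have h2 := LinearMap.congr_fun key z
  simp only [LinearMap.coe_comp, LinearEquiv.coe_coe, Function.comp_apply,
    LinearMap.mulRight_apply, Finsupp.lapply_apply] at h2
  rw [h2]
  by_cases hiU : i ∈ U
  · rw [if_pos hiU, if_pos hiU]
    simp only [LinearMap.coe_comp, LinearEquiv.coe_coe, Function.comp_apply,
      Finsupp.lapply_apply]
  · rw [if_neg hiU, if_neg hiU, LinearMap.zero_apply]

lemma exists_mul_eq_top (j : ℕ) (z : Qr n) (hz : z ≠ 0)
    (hsupp : ∀ S, (Bq n).repr z S ≠ 0 → n - j ≤ S.card) :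
    ∃ w, z * w = dmon Finset.univ := by
  classical
  induction j generalizing z with
  | zero =>
    have huniv : ∀ S : Finset (Fin n), (Bq n).repr z S ≠ 0 → S = Finset.univ := by
      intro S hS
      have h1 := hsupp S hS
      have h2 : S.card ≤ n := by
        simpa using Finset.card_le_univ S
      rw [← Finset.card_eq_iff_eq_univ, Fintype.card_fin]
      omega
    have hz' : z = (Bq n).repr z Finset.univ • dmon Finset.univ := by
      conv_lhs => rw [← (Bq n).sum_repr z]
      rw [Finset.sum_eq_single Finset.univ]
      · rw [Bq_apply]
      · intro S _ hS
        have hrz : (Bq n).repr z S = 0 := of_not_not fun h => hS (huniv S h)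
        rw [hrz, zero_smul]
      · simp
    have hc : (Bq n).repr z Finset.univ ≠ 0 := by
      intro h
      rw [h, zero_smul] at hz'
      exact hz hz'
    have hone : ∀ c : ZMod 2, c ≠ 0 → c = 1 := by decide
    rw [hz', hone _ hc, one_smul]
    exact ⟨1, mul_one _⟩
  | succ j ih =>
    by_cases h : ∀ S, (Bq n).repr z S ≠ 0 → n - j ≤ S.card
    · exact ih z hz h
    · push_neg at h
      obtain ⟨S₀, hS₀, hcard⟩ := h
      have hS₀univ : ∃ i, i ∉ S₀ := by
        by_contra hcon
        push_neg at hcon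
        have : S₀ = Finset.univ := Finset.eq_univ_iff_forall.mpr hcon
        rw [this, Finset.card_univ, Fintype.card_fin] at hcard
        omega
      obtain ⟨i, hi⟩ := hS₀univ
      have hz'0 : z * dmon {i} ≠ 0 := by
        intro h0
        have h1 := repr_mul_single i (insert i S₀) z
        rw [h0, if_pos (Finset.mem_insert_self i S₀), Finset.erase_insert hi,
          map_zero, Finsupp.coe_zero, Pi.zero_apply] at h1
        exact hS₀ h1.symm
      have hsupp' : ∀ S, (Bq n).repr (z * dmon {i}) S ≠ 0 → n - j ≤ S.card := by
        intro S hS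
        rw [repr_mul_single] at hS
        by_cases hiS : i ∈ S
        · rw [if_pos hiS] at hS
          have h1 := hsupp _ hS
          have h2 := Finset.card_erase_of_mem hiS
          have h3 : 1 ≤ S.card := Finset.card_pos.mpr ⟨i, hiS⟩
          omega
        · rw [if_neg hiS] at hS
          exact absurd rfl hS
      obtain ⟨w', hw'⟩ := ih (z * dmon {i}) hz'0 hsupp'
      exact ⟨dmon {i} * w', by rw [← mul_assoc]; exact hw'⟩

section Maps

variable {V : Type*} [AddCommGroup V] [Module (ZMod 2) V]

lemma add_eq_zero_imp {W : Type*} [AddCommGroup W] [Module (ZMod 2) W] {a b : W}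
    (h : a + b = 0) : a = b := by
  rw [eq_neg_of_add_eq_zero_left h, ← neg_one_smul (ZMod 2) b,
    show (-1 : ZMod 2) = 1 by decide, one_smul]

lemma ι_comm (x y : V) :
    ExteriorAlgebra.ι (ZMod 2) x * ExteriorAlgebra.ι (ZMod 2) y =
      ExteriorAlgebra.ι (ZMod 2) y * ExteriorAlgebra.ι (ZMod 2) x := by
  have h := ExteriorAlgebra.ι_sq_zero (R := ZMod 2) (x + y)
  rw [map_add, add_mul, mul_add, mul_add, ExteriorAlgebra.ι_sq_zero,
    ExteriorAlgebra.ι_sq_zero, zero_add, add_zero] at h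
  exact add_eq_zero_imp h

lemma ι_commute (b : Module.Basis (Fin n) (ZMod 2) V) {S : Finset (Fin n)} :
    (S : Set (Fin n)).Pairwise fun i j =>
      Commute (ExteriorAlgebra.ι (ZMod 2) (b i)) (ExteriorAlgebra.ι (ZMod 2) (b j)) :=
  fun i _ j _ _ => ι_comm (b i) (b j)

/-- The wedge monomials in the exterior algebra. -/
def wedgeMon (b : Module.Basis (Fin n) (ZMod 2) V) (S : Finset (Fin n)) :
    ExteriorAlgebra (ZMod 2) V :=
  S.noncommProd (fun i => ExteriorAlgebra.ι (ZMod 2) (b i)) (ι_commute b)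

lemma wedgeMon_empty (b : Module.Basis (Fin n) (ZMod 2) V) : wedgeMon b ∅ = 1 :=
  Finset.noncommProd_empty _ _

lemma wedgeMon_singleton (b : Module.Basis (Fin n) (ZMod 2) V) (i : Fin n) :
    wedgeMon b {i} = ExteriorAlgebra.ι (ZMod 2) (b i) :=
  Finset.noncommProd_singleton _ _

lemma wedgeMon_insert (b : Module.Basis (Fin n) (ZMod 2) V) {i : Fin n} {S : Finset (Fin n)}
    (hi : i ∉ S) :
    wedgeMon b (insert i S) = ExteriorAlgebra.ι (ZMod 2) (b i) * wedgeMon b S :=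
  Finset.noncommProd_insert_of_notMem _ _ _ _ hi

lemma wedgeMon_mul_disjoint (b : Module.Basis (Fin n) (ZMod 2) V) {S T : Finset (Fin n)}
    (h : Disjoint S T) : wedgeMon b S * wedgeMon b T = wedgeMon b (S ∪ T) :=
  (Finset.noncommProd_union_of_disjoint h _ _).symm

lemma wedgeMon_mul_not_disjoint (b : Module.Basis (Fin n) (ZMod 2) V) {S T : Finset (Fin n)}
    (h : ¬ Disjoint S T) : wedgeMon b S * wedgeMon b T = 0 := by
  obtain ⟨i, hiS, hiT⟩ := Finset.not_disjoint_iff.mp h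
  rw [wedgeMon, wedgeMon, ← Finset.noncommProd_erase_mul S hiS _ (ι_commute b),
    ← Finset.mul_noncommProd_erase T hiT _ (ι_commute b), mul_assoc,
    ← mul_assoc (ExteriorAlgebra.ι (ZMod 2) (b i)), ExteriorAlgebra.ι_sq_zero,
    zero_mul, mul_zero]

lemma ι_eq_sum (b : Module.Basis (Fin n) (ZMod 2) V) (v : V) :
    ExteriorAlgebra.ι (ZMod 2) v = ∑ i, b.repr v i • ExteriorAlgebra.ι (ZMod 2) (b i) := by
  conv_lhs => rw [← b.sum_repr v]
  rw [map_sum]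
  exact Finset.sum_congr rfl fun i _ => map_smul _ _ _

lemma span_wedgeMon (b : Module.Basis (Fin n) (ZMod 2) V) :
    Submodule.span (ZMod 2) (Set.range (wedgeMon b)) = ⊤ := by
  rw [eq_top_iff]
  rintro a -
  induction a using ExteriorAlgebra.induction with
  | algebraMap r =>
    rw [Algebra.algebraMap_eq_smul_one]
    exact Submodule.smul_mem _ _ (Submodule.subset_span ⟨∅, wedgeMon_empty b⟩)
  | ι x =>
    rw [ι_eq_sum b]
    exact Submodule.sum_mem _ fun i _ =>
      Submodule.smul_mem _ _ (Submodule.subset_span ⟨{i}, wedgeMon_singleton b i⟩)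
  | mul a₁ a₂ h₁ h₂ =>
    have hmul : Submodule.span (ZMod 2) (Set.range (wedgeMon b)) *
        Submodule.span (ZMod 2) (Set.range (wedgeMon b)) ≤
        Submodule.span (ZMod 2) (Set.range (wedgeMon b)) := by
      rw [Submodule.span_mul_span]
      rw [Submodule.span_le]
      rintro x hx
      obtain ⟨u, hu, w, hw, rfl⟩ := Set.mem_mul.mp hx
      obtain ⟨S, rfl⟩ := hu
      obtain ⟨T, rfl⟩ := hw
      by_cases hd : Disjoint S T
      · rw [wedgeMon_mul_disjoint b hd]
        exact Submodule.subset_span ⟨S ∪ T, rfl⟩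
      · rw [wedgeMon_mul_not_disjoint b hd]
        exact Submodule.zero_mem _
    exact hmul (Submodule.mul_mem_mul h₁ h₂)
  | add a₁ a₂ h₁ h₂ => exact Submodule.add_mem _ h₁ h₂

/-- The linear map `V → 𝔽₂[X]` sending a vector to the corresponding linear polynomial. -/
def plin (b : Module.Basis (Fin n) (ZMod 2) V) : V →ₗ[ZMod 2] MvPolynomial (Fin n) (ZMod 2) where
  toFun v := ∑ i, b.repr v i • X i
  map_add' x y := by
    simp only [map_add, Finsupp.coe_add, Pi.add_apply, add_smul, Finset.sum_add_distrib]
  map_smul' c x := by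
    simp only [map_smul, Finsupp.coe_smul, Pi.smul_apply, smul_eq_mul, RingHom.id_apply,
      Finset.smul_sum, smul_smul]

lemma plin_apply (b : Module.Basis (Fin n) (ZMod 2) V) (v : V) :
    plin b v = ∑ i, b.repr v i • X i := rfl

lemma plin_sq_mem (b : Module.Basis (Fin n) (ZMod 2) V) (v : V) : plin b v * plin b v ∈ Isq n := by
  have h1 : plin b v * plin b v = ∑ i, (b.repr v i • (X i : MvPolynomial (Fin n) (ZMod 2))) *
      (b.repr v i • X i) := by
    rw [plin_apply]
    exact CharTwo.sum_mul_self _ _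
  rw [h1]
  refine Submodule.sum_mem _ fun i _ => ?_
  rw [smul_mul_smul_comm]
  have hX : (X i : MvPolynomial (Fin n) (ZMod 2)) * X i ∈ Isq n := by
    rw [← pow_two]; exact Ideal.subset_span ⟨i, rfl⟩
  exact Submodule.smul_of_tower_mem _ (b.repr v i * b.repr v i) hX

/-- The algebra map from the exterior algebra to the model ring. -/
def ΨA (b : Module.Basis (Fin n) (ZMod 2) V) :
    ExteriorAlgebra (ZMod 2) V →ₐ[ZMod 2] Qr n :=
  ExteriorAlgebra.lift (ZMod 2)
    ⟨(Ideal.Quotient.mkₐ (ZMod 2) (Isq n)).toLinearMap ∘ₗ plin b, fun v => by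
      simp only [LinearMap.coe_comp, Function.comp_apply, AlgHom.toLinearMap_apply]
      rw [← map_mul, Ideal.Quotient.mkₐ_eq_mk, Ideal.Quotient.eq_zero_iff_mem]
      exact plin_sq_mem b v⟩

lemma ΨA_ι (b : Module.Basis (Fin n) (ZMod 2) V) (v : V) :
    ΨA b (ExteriorAlgebra.ι (ZMod 2) v) =
      Ideal.Quotient.mkₐ (ZMod 2) (Isq n) (plin b v) := by
  unfold ΨA
  rw [ExteriorAlgebra.lift_ι_apply]
  rfl

lemma mk_X_eq_dmon (i : Fin n) :
    Ideal.Quotient.mkₐ (ZMod 2) (Isq n) (X i) = dmon {i} := by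
  rw [dmon]
  congr 1
  have h1 : msq ({i} : Finset (Fin n)) = Finsupp.single i 1 := Finset.sum_singleton _ _
  have h2 := X_pow_eq_monomial (R := ZMod 2) (n := i) (e := 1)
  rw [pow_one] at h2
  rw [h1, ← h2]

lemma plin_basis (b : Module.Basis (Fin n) (ZMod 2) V) (i : Fin n) : plin b (b i) = X i := by
  rw [plin_apply, Module.Basis.repr_self]
  rw [Finset.sum_eq_single i (fun j _ hj => by
    rw [Finsupp.single_apply, if_neg (Ne.symm hj), zero_smul]) (by simp)]
  rw [Finsupp.single_apply, if_pos rfl, one_smul]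

lemma dmon_empty : dmon (n := n) ∅ = 1 := by
  rw [dmon, show msq (∅ : Finset (Fin n)) = 0 from Finset.sum_empty, monomial_zero', C_1,
    map_one]

lemma ΨA_wedgeMon (b : Module.Basis (Fin n) (ZMod 2) V) (S : Finset (Fin n)) :
    ΨA b (wedgeMon b S) = dmon S := by
  classical
  induction S using Finset.induction_on with
  | empty => rw [wedgeMon_empty, map_one, dmon_empty]
  | insert _ _ hi =>
    rename_i i S ih
    rw [wedgeMon_insert b hi, map_mul, ΨA_ι, plin_basis, mk_X_eq_dmon, ih,
      dmon_mul_disjoint (Finset.disjoint_singleton_left.mpr hi), ← Finset.insert_eq]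

lemma ΨA_bijective (b : Module.Basis (Fin n) (ZMod 2) V) : Function.Bijective (ΨA b) := by
  constructor
  · rw [injective_iff_map_eq_zero]
    intro z hz
    have hmem : z ∈ Submodule.span (ZMod 2) (Set.range (wedgeMon b)) := by
      rw [span_wedgeMon]; trivial
    obtain ⟨c, rfl⟩ := (Submodule.mem_span_range_iff_exists_fun (ZMod 2)).mp hmem
    have h1 : ∑ S : Finset (Fin n), c S • dmon S = 0 := by
      rw [← hz, map_sum]
      exact Finset.sum_congr rfl fun S _ => by rw [map_smul, ΨA_wedgeMon]
    have h2 := Fintype.linearIndependent_iff.mp dmon_li c h1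
    rw [Finset.sum_congr rfl fun S _ => by rw [h2 S, zero_smul]]
    exact Finset.sum_const_zero
  · intro q
    have hmem : q ∈ Submodule.span (ZMod 2) (Set.range (dmon (n := n))) := by
      rw [span_dmon]; trivial
    obtain ⟨c, rfl⟩ := (Submodule.mem_span_range_iff_exists_fun (ZMod 2)).mp hmem
    refine ⟨∑ S : Finset (Fin n), c S • wedgeMon b S, ?_⟩
    rw [map_sum]
    exact Finset.sum_congr rfl fun S _ => by rw [map_smul, ΨA_wedgeMon]

end Maps

section Final

variable {V : Type*} [AddCommGroup V] [Module (ZMod 2) V]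

lemma ΨA_ι_mem (b : Module.Basis (Fin n) (ZMod 2) V) (v : V) :
    ΨA b (ExteriorAlgebra.ι (ZMod 2) v) ∈
      Submodule.span (ZMod 2) (dmon '' {S : Finset (Fin n) | S.card = 1}) := by
  rw [ΨA_ι, plin_apply, map_sum]
  refine Submodule.sum_mem _ fun i _ => ?_
  rw [map_smul, mk_X_eq_dmon]
  exact Submodule.smul_mem _ _
    (Submodule.subset_span ⟨{i}, Finset.card_singleton i, rfl⟩)

lemma map_pow_le (b : Module.Basis (Fin n) (ZMod 2) V) (k : ℕ) :
    Submodule.map (ΨA b).toLinearMap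
      ((LinearMap.range (ExteriorAlgebra.ι (ZMod 2) :
        V →ₗ[ZMod 2] ExteriorAlgebra (ZMod 2) V)) ^ k)
      ≤ Submodule.span (ZMod 2) (dmon '' {S : Finset (Fin n) | S.card = k}) := by
  induction k with
  | zero =>
    rw [pow_zero, Submodule.map_one, Submodule.one_eq_span, Submodule.span_le]
    rintro x hx
    rw [Set.mem_singleton_iff.mp hx]
    exact Submodule.subset_span ⟨∅, Finset.card_empty, dmon_empty⟩
  | succ k ih =>
    rw [pow_succ, Submodule.map_mul]
    have hb : Submodule.map (ΨA b).toLinearMap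
        (LinearMap.range (ExteriorAlgebra.ι (ZMod 2) :
          V →ₗ[ZMod 2] ExteriorAlgebra (ZMod 2) V)) ≤
        Submodule.span (ZMod 2) (dmon '' {S : Finset (Fin n) | S.card = 1}) := by
      rintro x hx
      obtain ⟨y, hy, rfl⟩ := hx
      obtain ⟨v, rfl⟩ := hy
      exact ΨA_ι_mem b v
    refine le_trans (mul_le_mul' ih hb) ?_
    · rw [Submodule.span_mul_span, Submodule.span_le]
      rintro x hx
      obtain ⟨u, hu, w, hw, rfl⟩ := Set.mem_mul.mp hx
      obtain ⟨S, hS, rfl⟩ := hu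
      obtain ⟨T, hT, rfl⟩ := hw
      by_cases hd : Disjoint S T
      · rw [dmon_mul_disjoint hd]
        refine Submodule.subset_span ⟨S ∪ T, ?_, rfl⟩
        rw [Set.mem_setOf_eq, Finset.card_union_of_disjoint hd, hS, hT]
      · rw [dmon_mul_not_disjoint hd]
        exact Submodule.zero_mem _

lemma ΨA_top (b : Module.Basis (Fin n) (ZMod 2) V) {e : ExteriorAlgebra (ZMod 2) V}
    (he : e ∈ ⋀[ZMod 2]^n V) (he0 : e ≠ 0) : ΨA b e = dmon Finset.univ := by
  have h1 : ΨA b e ∈ Submodule.span (ZMod 2)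
      (dmon '' {S : Finset (Fin n) | S.card = n}) :=
    map_pow_le b n (Submodule.mem_map_of_mem he)
  have hset : {S : Finset (Fin n) | S.card = n} = {Finset.univ} := by
    ext S
    rw [Set.mem_setOf_eq, Set.mem_singleton_iff, ← Finset.card_eq_iff_eq_univ,
      Fintype.card_fin]
  rw [hset, Set.image_singleton] at h1
  obtain ⟨c, hc⟩ := Submodule.mem_span_singleton.mp h1
  have hc0 : c ≠ 0 := by
    intro h
    rw [h, zero_smul] at hc
    exact he0 ((injective_iff_map_eq_zero (ΨA b)).mp (ΨA_bijective b).1 e hc.symm)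
  have hone : ∀ c : ZMod 2, c ≠ 0 → c = 1 := by decide
  rw [← hc, hone c hc0, one_smul]

end Final

end

end AllDivideAux

/-- Let `V` be an `n`-dimensional vector space over `𝔽₂` and `e ∈ Λⁿ(V)` the nonzero
top exterior form.  Then every nonzero `x` in the exterior algebra `Λ(V)` divides `e`:
there exists `y` with `x * y = e`. -/
theorem all_divide_top_form (V : Type*) [AddCommGroup V] [Module (ZMod 2) V]
    [FiniteDimensional (ZMod 2) V] (n : ℕ) (hn : Module.finrank (ZMod 2) V = n)
    (e : ExteriorAlgebra (ZMod 2) V) (he : e ∈ ⋀[ZMod 2]^n V) (he0 : e ≠ 0)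
    (x : ExteriorAlgebra (ZMod 2) V) (hx : x ≠ 0) :
    ∃ y : ExteriorAlgebra (ZMod 2) V, x * y = e := by
  classical
  let b : Module.Basis (Fin n) (ZMod 2) V := Module.finBasisOfFinrankEq (ZMod 2) V hn
  have hinj := (AllDivideAux.ΨA_bijective b).1
  have hsurj := (AllDivideAux.ΨA_bijective b).2
  have hxz : AllDivideAux.ΨA b x ≠ 0 := by
    intro h
    exact hx ((injective_iff_map_eq_zero _).mp hinj x h)
  obtain ⟨w, hw⟩ := AllDivideAux.exists_mul_eq_top n (AllDivideAux.ΨA b x) hxz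
    (fun S _ => by omega)
  obtain ⟨y, hy⟩ := hsurj w
  refine ⟨y, hinj ?_⟩
  rw [map_mul, hy, hw, AllDivideAux.ΨA_top b he he0]
end

section
/- The ring R = F_2[w₁, w₂, ...] is polynomially generated by the elements p₁, w₂, p₃, w₄, p₅, w₆, ..., i.e., the ring homomorphism from the polynomial ring F_2[t₁, t₂, t₃, ...] sending t_{2i-1} ↦ p_{2i-1} and t_{2i} ↦ w_{2i} is an isomorphism onto R. -/
open Finset

open MvPolynomial in
/-- Inverse of a "triangular" substitution `X n ↦ X n + g n`. -/
noncomputable def tri (g : ℕ → MvPolynomial ℕ (ZMod 2)) : ℕ → MvPolynomial ℕ (ZMod 2)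
  | n => MvPolynomial.X n -
      MvPolynomial.aeval (fun m : ℕ => if h : m < n then tri g m else 0) (g n)
  termination_by n => n

open MvPolynomial in
lemma aeval_supported_congr {s : Set ℕ} {f₁ f₂ : ℕ → MvPolynomial ℕ (ZMod 2)}
    (h : ∀ i ∈ s, f₁ i = f₂ i) {q : MvPolynomial ℕ (ZMod 2)}
    (hq : q ∈ MvPolynomial.supported (ZMod 2) s) :
    MvPolynomial.aeval f₁ q = MvPolynomial.aeval f₂ q := by
  rw [MvPolynomial.supported_eq_adjoin_X] at hq
  induction hq using Algebra.adjoin_induction with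
  | mem x hx => obtain ⟨i, hi, rfl⟩ := hx; simp [h i hi]
  | algebraMap r => simp
  | add x y hx hy ihx ihy => rw [map_add, map_add, ihx, ihy]
  | mul x y hx hy ihx ihy => rw [map_mul, map_mul, ihx, ihy]

/-- `R = 𝔽₂[w₁, w₂, …]` is polynomially generated by `p₁, w₂, p₃, w₄, p₅, w₆, …`:
the algebra homomorphism from the polynomial ring in variables `t₁, t₂, t₃, …`
(where `tₙ` is represented by the index `n - 1 : ℕ`) sending `t_{2i-1} ↦ p_{2i-1}` and
`t_{2i} ↦ w_{2i}` is an isomorphism onto `R`.  Here the power sums `p_k` are defined by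
the Newton identity `k · w_k = ∑_{j=0}^{k-1} p_{k-j} · w_j`. -/
theorem new_coordinates
    (p : ℕ → MvPolynomial ℕ (ZMod 2))
    (hp : ∀ k : ℕ, 1 ≤ k →
      (k : MvPolynomial ℕ (ZMod 2)) * w k = ∑ j ∈ Finset.range k, p (k - j) * w j) :
    Function.Bijective
      (MvPolynomial.aeval
        (fun n : ℕ => if Odd (n + 1) then p (n + 1) else w (n + 1)) :
        MvPolynomial ℕ (ZMod 2) →ₐ[ZMod 2] MvPolynomial ℕ (ZMod 2)) := by
  classical
  set f : ℕ → MvPolynomial ℕ (ZMod 2) :=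
    fun n : ℕ => if Odd (n + 1) then p (n + 1) else w (n + 1) with hf
  -- rearranged Newton identity
  have hp' : ∀ m : ℕ, p (m + 1) =
      ((m + 1 : ℕ) : MvPolynomial ℕ (ZMod 2)) * MvPolynomial.X m -
        ∑ j ∈ Finset.range m, p (m - j) * MvPolynomial.X j := by
    intro m
    have h := hp (m + 1) (Nat.le_add_left 1 m)
    rw [Finset.sum_range_succ'] at h
    simp only [Nat.succ_sub_succ, Nat.sub_zero, w] at h
    rw [eq_sub_iff_add_eq, h]
    ring
  -- p k is supported on variables with index < k
  have hpsupp : ∀ k : ℕ, 1 ≤ k → p k ∈ MvPolynomial.supported (ZMod 2) (Set.Iio k) := by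
    intro k
    induction k using Nat.strong_induction_on with
    | _ k ih =>
      intro hk
      obtain ⟨m, rfl⟩ := Nat.exists_eq_add_of_le' hk
      rw [hp' m]
      refine sub_mem (mul_mem (Subalgebra.natCast_mem _ _)
        (Algebra.subset_adjoin ⟨m, Nat.lt_succ_self m, rfl⟩))
        (Subalgebra.sum_mem _ fun j hj => ?_)
      rw [Finset.mem_range] at hj
      refine mul_mem ?_ (Algebra.subset_adjoin ⟨j, hj.trans (Nat.lt_succ_self m), rfl⟩)
      exact MvPolynomial.supported_mono
        (Set.Iio_subset_Iio ((Nat.sub_le m j).trans (Nat.le_succ m)))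
        (ih (m - j) (by omega) (by omega))
  set g : ℕ → MvPolynomial ℕ (ZMod 2) := fun n => f n - MvPolynomial.X n with hgdef
  have hfg : ∀ n, f n = MvPolynomial.X n + g n := fun n => by
    simp [hgdef]
  -- g n is supported on variables with index < n
  have hg : ∀ n : ℕ, g n ∈ MvPolynomial.supported (ZMod 2) (Set.Iio n) := by
    intro n
    by_cases hodd : Odd (n + 1)
    · have hcast : ((n + 1 : ℕ) : MvPolynomial ℕ (ZMod 2)) = 1 := by
        have h2 : ((n + 1 : ℕ) : ZMod 2) = 1 := by
          rw [← ZMod.natCast_mod, Nat.odd_iff.mp hodd, Nat.cast_one]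
        rw [← MvPolynomial.C_eq_coe_nat, h2, MvPolynomial.C_1]
      have hgn : g n = -(∑ j ∈ Finset.range n, p (n - j) * MvPolynomial.X j) := by
        simp only [hgdef, hf, if_pos hodd, hp' n, hcast, one_mul]
        ring
      rw [hgn]
      refine neg_mem (Subalgebra.sum_mem _ fun j hj => ?_)
      rw [Finset.mem_range] at hj
      refine mul_mem ?_ (Algebra.subset_adjoin ⟨j, hj, rfl⟩)
      exact MvPolynomial.supported_mono (Set.Iio_subset_Iio (Nat.sub_le n j))
        (hpsupp (n - j) (by omega))
    · have h0 : g n = 0 := by simp [hgdef, hf, if_neg hodd, w]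
      rw [h0]; exact zero_mem _
  set v : ℕ → MvPolynomial ℕ (ZMod 2) := tri g with hv
  -- the recursive equation for v, with the truncation removed
  have hveq : ∀ n, v n = MvPolynomial.X n - MvPolynomial.aeval v (g n) := by
    intro n
    rw [hv, tri]
    congr 1
    exact aeval_supported_congr (fun i hi => by simp [Set.mem_Iio.mp hi]) (hg n)
  set φ : MvPolynomial ℕ (ZMod 2) →ₐ[ZMod 2] MvPolynomial ℕ (ZMod 2) :=
    MvPolynomial.aeval f with hφ
  set ψ : MvPolynomial ℕ (ZMod 2) →ₐ[ZMod 2] MvPolynomial ℕ (ZMod 2) :=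
    MvPolynomial.aeval v with hψ
  -- ψ ∘ φ = id
  have hψφ : ∀ x, ψ (φ x) = x := by
    have hcomp : ψ.comp φ = AlgHom.id (ZMod 2) (MvPolynomial ℕ (ZMod 2)) := by
      apply MvPolynomial.algHom_ext
      intro n
      simp only [AlgHom.comp_apply, hφ, MvPolynomial.aeval_X, AlgHom.id_apply]
      rw [hfg n, map_add, hψ, MvPolynomial.aeval_X, hveq n]
      ring
    intro x
    exact DFunLike.congr_fun hcomp x
  -- φ ∘ ψ = id : first on the generators, by strong induction
  have hφv : ∀ n, φ (v n) = MvPolynomial.X n := by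
    intro n
    induction n using Nat.strong_induction_on with
    | _ n ih =>
      have hfix : φ (ψ (g n)) = g n := by
        have hle : MvPolynomial.supported (ZMod 2) (Set.Iio n) ≤
            AlgHom.equalizer (φ.comp ψ) (AlgHom.id (ZMod 2) (MvPolynomial ℕ (ZMod 2))) := by
          rw [MvPolynomial.supported_eq_adjoin_X]
          apply Algebra.adjoin_le
          rintro x ⟨i, hi, rfl⟩
          show φ (ψ (MvPolynomial.X i)) = MvPolynomial.X i
          rw [hψ, MvPolynomial.aeval_X]
          exact ih i (Set.mem_Iio.mp hi)
        exact hle (hg n)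
      rw [hveq n, map_sub, hφ, MvPolynomial.aeval_X, ← hφ, hfix, hfg n]
      ring
  have hφψ : ∀ x, φ (ψ x) = x := by
    have hcomp : φ.comp ψ = AlgHom.id (ZMod 2) (MvPolynomial ℕ (ZMod 2)) := by
      apply MvPolynomial.algHom_ext
      intro n
      simp only [AlgHom.comp_apply, hψ, MvPolynomial.aeval_X, AlgHom.id_apply]
      exact hφv n
    intro x
    exact DFunLike.congr_fun hcomp x
  exact Function.bijective_iff_has_inverse.mpr ⟨ψ, hψφ, hφψ⟩
end

section
/- In R = F_2[w₁, w₂, ...] with involution ω, fixed subring S, and ideal I = {x + ω(x) : x ∈ R} of S, the involution is transverse: RI ∩ S = I, where RI is the ideal of R generated by I. -/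
open Finset

namespace FT
open MvPolynomial

abbrev R2 := MvPolynomial ℕ (ZMod 2)

lemma add_self (x : R2) : x + x = 0 :=
  CharTwo.add_self_eq_zero x

lemma add_eq_iff {x y z : R2} : x + y = z ↔ x = z + y := by
  constructor
  · rintro rfl; rw [add_assoc, add_self, add_zero]
  · rintro rfl; rw [add_assoc, add_self, add_zero]

/-- length of a monomial -/
def len (σ : ℕ →₀ ℕ) : ℕ := σ.sum fun _ e => e
/-- weight of a monomial, with variable `X i` having weight `i+1` -/
def wtm (σ : ℕ →₀ ℕ) : ℕ := σ.sum fun i e => (i+1) * e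
/-- non-squarefree -/
def Sq (σ : ℕ →₀ ℕ) : Prop := ∃ i, 2 ≤ σ i

def Supp (P : (ℕ →₀ ℕ) → Prop) (x : R2) : Prop := ∀ σ ∈ x.support, P σ

lemma Supp_zero {P} : Supp P 0 := by intro σ h; simp at h

lemma Supp_add {P} {x y : R2} (hx : Supp P x) (hy : Supp P y) : Supp P (x + y) := by
  intro σ h
  rcases Finset.mem_union.1 (MvPolynomial.support_add h) with h' | h'
  · exact hx σ h'
  · exact hy σ h'

lemma Supp_smul {P} {x : R2} (a : ZMod 2) (hx : Supp P x) : Supp P (a • x) := by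
  intro σ h
  exact hx σ (Finsupp.support_smul h)

lemma Supp_sum {P} {s : Finset α} {f : α → R2} (h : ∀ a ∈ s, Supp P (f a)) :
    Supp P (∑ a ∈ s, f a) := by
  classical
  induction s using Finset.induction_on with
  | empty => simpa using Supp_zero
  | insert a s hni ih =>
    rw [Finset.sum_insert hni]
    exact Supp_add (h _ (Finset.mem_insert_self _ _))
      (ih fun a ha => h a (Finset.mem_insert_of_mem ha))

lemma Supp_mono {P Q : (ℕ →₀ ℕ) → Prop} (h : ∀ σ, P σ → Q σ) {x : R2} (hx : Supp P x) :
    Supp Q x := fun σ hσ => h σ (hx σ hσ)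

lemma Supp_monomial {P} {σ : ℕ →₀ ℕ} (h : P σ) (a : ZMod 2) : Supp P (monomial σ a) := by
  intro τ hτ
  rcases MvPolynomial.support_monomial_subset hτ with h'
  simp at h'; subst h'; exact h

lemma Supp_mul {P Q R : (ℕ →₀ ℕ) → Prop} {x y : R2}
    (hx : Supp P x) (hy : Supp Q y)
    (h : ∀ σ τ, P σ → Q τ → R (σ + τ)) : Supp R (x * y) := by
  classical
  intro σ hσ
  rcases Finset.mem_add.1 (MvPolynomial.support_mul x y hσ) with ⟨a, ha, b, hb, rfl⟩
  exact h a b (hx a ha) (hy b hb)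

lemma len_add (σ τ : ℕ →₀ ℕ) : len (σ + τ) = len σ + len τ := by
  simp [len, Finsupp.sum_add_index']

lemma wtm_add (σ τ : ℕ →₀ ℕ) : wtm (σ + τ) = wtm σ + wtm τ := by
  simp [wtm, Finsupp.sum_add_index', mul_add]

lemma len_le_wtm (σ : ℕ →₀ ℕ) : len σ ≤ wtm σ := by
  unfold len wtm Finsupp.sum
  apply Finset.sum_le_sum
  intro i _
  exact Nat.le_mul_of_pos_left _ (Nat.succ_pos i)

lemma len_single (i a : ℕ) : len (Finsupp.single i a) = a := by
  simp [len, Finsupp.sum_single_index]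

lemma wtm_single (i a : ℕ) : wtm (Finsupp.single i a) = (i+1) * a := by
  simp [wtm, Finsupp.sum_single_index]

noncomputable def cc (k : ℕ) : R2 :=
  if k ≠ 0 ∧ k % 2 = 0 then (w (k/2))^2 else 0


/-- closed form of the middle-square sum -/
lemma cc_eq (k : ℕ) (hk : 1 ≤ k) :
    ∑ i ∈ Finset.Ico 1 k, w i * w (k - i) = cc k := by
  classical
  -- split at the middle
  rw [← Finset.sum_filter_add_sum_filter_not (Finset.Ico 1 k) (fun i => 2*i = k)]
  have h1 : ∑ i ∈ (Finset.Ico 1 k).filter (fun i => 2*i = k), w i * w (k - i) = cc k := by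
    by_cases he : k % 2 = 0
    · have : (Finset.Ico 1 k).filter (fun i => 2*i = k) = {k/2} := by
        ext i
        simp only [Finset.mem_filter, Finset.mem_Ico, Finset.mem_singleton]
        omega
      rw [this, Finset.sum_singleton, cc, if_pos ⟨by omega, he⟩]
      have : k - k/2 = k/2 := by omega
      rw [this, sq]
    · have : (Finset.Ico 1 k).filter (fun i => 2*i = k) = ∅ := by
        ext i
        simp only [Finset.mem_filter, Finset.mem_Ico, Finset.notMem_empty, iff_false,
          not_and]
        omega
      rw [this, Finset.sum_empty, cc, if_neg]
      tauto
  have h2 : ∑ i ∈ (Finset.Ico 1 k).filter (fun i => ¬ 2*i = k), w i * w (k - i) = 0 := by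
    apply Finset.sum_involution (fun i _ => k - i)
    · intro i hi
      simp only [Finset.mem_filter, Finset.mem_Ico] at hi
      have : k - (k - i) = i := by omega
      rw [this, mul_comm, add_self]
    · intro i hi _
      simp only [Finset.mem_filter, Finset.mem_Ico] at hi
      omega
    · intro i hi
      simp only [Finset.mem_filter, Finset.mem_Ico] at hi ⊢
      omega
    · intro i hi
      simp only [Finset.mem_filter, Finset.mem_Ico] at hi
      have : k - (k - i) = i := by omega
      simp [this]
  rw [h1, h2, add_zero]

variable (ω : MvPolynomial ℕ (ZMod 2) →+* MvPolynomial ℕ (ZMod 2))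

/-- the deviation of `ω` from the identity on generators -/
noncomputable def g (k : ℕ) : R2 := ω (w k) + w k


lemma omega_w (k : ℕ) : ω (w k) = w k + g ω k := by
  rw [g, add_comm (ω (w k)) (w k), ← add_assoc, add_self, zero_add]

lemma omega_one : ω 1 = 1 := map_one ω

lemma g_zero : g ω 0 = 0 := by simp [g, w, omega_one, add_self]

variable (hω : ∀ k : ℕ, 1 ≤ k → ∑ i ∈ Finset.range (k + 1), w i * ω (w (k - i)) = 0)

include hω in
/-- basic recursion: `ω (w k) = w k + ∑_{i=1}^{k-1} w i * ω (w (k-i))`. -/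
lemma omega_w_rec (k : ℕ) (hk : 1 ≤ k) :
    ω (w k) = w k + ∑ i ∈ Finset.Ico 1 k, w i * ω (w (k - i)) := by
  have h := hω k hk
  rw [Finset.sum_range_succ] at h
  rw [Finset.range_eq_Ico, Finset.sum_eq_sum_Ico_succ_bot hk] at h
  simp only [w.eq_1, Nat.sub_self, map_one, mul_one, one_mul, Nat.sub_zero] at h
  have h2 : ω (w k) + (∑ i ∈ Finset.Ico 1 k, w i * ω (w (k - i)) + w k) = 0 := by
    rw [← add_assoc]; convert h using 2
  rw [add_eq_iff] at h2
  rw [h2, zero_add, add_comm]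


end FT
namespace FT
open MvPolynomial
variable (ω : MvPolynomial ℕ (ZMod 2) →+* MvPolynomial ℕ (ZMod 2))
variable (hω : ∀ k : ℕ, 1 ≤ k → ∑ i ∈ Finset.range (k + 1), w i * ω (w (k - i)) = 0)

lemma cc_zero : cc 0 = 0 := by simp [cc]

lemma Supp_w (k : ℕ) (hk : 1 ≤ k) : Supp (fun σ => len σ = 1 ∧ wtm σ = k) (w k) := by
  obtain ⟨j, rfl⟩ : ∃ j, k = j + 1 := ⟨k - 1, by omega⟩
  show Supp _ (X j)
  rw [MvPolynomial.X]
  apply Supp_monomial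
  exact ⟨len_single j 1, by rw [wtm_single, mul_one]⟩

lemma cc_monomial (k : ℕ) (h0 : k ≠ 0) (h2 : k % 2 = 0) :
    cc k = monomial (Finsupp.single (k/2 - 1) 2) 1 := by
  rw [cc, if_pos ⟨h0, h2⟩]
  obtain ⟨j, hj⟩ : ∃ j, k/2 = j + 1 := ⟨k/2 - 1, by omega⟩
  rw [hj]
  simp only [Nat.add_sub_cancel]
  show (X j : R2)^2 = _
  rw [MvPolynomial.X_pow_eq_monomial]

lemma Supp_cc (k : ℕ) : Supp (fun σ => Sq σ ∧ len σ = 2 ∧ wtm σ ≤ k) (cc k) := by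
  by_cases h : k ≠ 0 ∧ k % 2 = 0
  · rw [cc_monomial k h.1 h.2]
    apply Supp_monomial
    refine ⟨⟨k/2 - 1, by simp⟩, len_single _ 2, ?_⟩
    rw [wtm_single]; omega
  · rw [cc, if_neg h]; exact Supp_zero

lemma Sq_add_right (σ τ : ℕ →₀ ℕ) (h : Sq τ) : Sq (σ + τ) := by
  obtain ⟨i, hi⟩ := h
  exact ⟨i, by simp; omega⟩

include hω in
lemma g_rec (k : ℕ) (hk : 1 ≤ k) :
    g ω k + cc k = ∑ i ∈ Finset.Ico 1 k, w i * g ω (k - i) := by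
  have h := omega_w_rec ω hω k hk
  have : ∑ i ∈ Finset.Ico 1 k, w i * ω (w (k-i))
      = cc k + ∑ i ∈ Finset.Ico 1 k, w i * g ω (k - i) := by
    rw [← cc_eq k hk, ← Finset.sum_add_distrib]
    apply Finset.sum_congr rfl
    intro i _
    rw [omega_w, mul_add]
  rw [this] at h
  rw [g, h]
  have hh : ∀ a b c : R2, a + (b + c) + a + b = c := by
    intro a b c
    have h2 : a + (b + c) + a + b = (a + a) + (b + b) + c := by ring
    rw [h2, add_self, add_self, zero_add, zero_add]
  exact hh (w k) (cc k) _

include hω in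
lemma g_cc_Supp : ∀ k, Supp (fun σ => Sq σ ∧ 3 ≤ len σ ∧ wtm σ ≤ k) (g ω k + cc k) := by
  intro k
  induction k using Nat.strong_induction_on with
  | _ k IH =>
    rcases Nat.eq_zero_or_pos k with rfl | hk
    · rw [g_zero, cc_zero, add_zero]; exact Supp_zero
    have gS : ∀ j, 1 ≤ j → j < k → Supp (fun σ => Sq σ ∧ 2 ≤ len σ ∧ wtm σ ≤ j) (g ω j) := by
      intro j h1 h2
      have : g ω j = (g ω j + cc j) + cc j := by
        rw [add_assoc, add_self, add_zero]
      rw [this]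
      apply Supp_add
      · exact Supp_mono (fun σ h => ⟨h.1, by omega, h.2.2⟩) (IH j h2)
      · exact Supp_mono (fun σ h => ⟨h.1, by omega, h.2.2⟩) (Supp_cc j)
    rw [g_rec ω hω k hk]
    apply Supp_sum
    intro i hi
    simp only [Finset.mem_Ico] at hi
    rcases Nat.eq_zero_or_pos (k - i) with h0 | h1
    · have : g ω (k - i) = 0 := by rw [h0, g_zero]
      rw [this, mul_zero]; exact Supp_zero
    exact Supp_mul (Supp_w i hi.1) (gS (k-i) h1 (by omega))
      (fun σ τ hσ hτ => ⟨Sq_add_right σ τ hτ.1, by rw [len_add]; omega, by rw [wtm_add]; omega⟩)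

include hω in
lemma g_Supp (k : ℕ) : Supp (fun σ => Sq σ ∧ 2 ≤ len σ ∧ wtm σ ≤ k) (g ω k) := by
  have : g ω k = (g ω k + cc k) + cc k := by rw [add_assoc, add_self, add_zero]
  rw [this]
  apply Supp_add
  · exact Supp_mono (fun σ h => ⟨h.1, by omega, h.2.2⟩) (g_cc_Supp ω hω k)
  · exact Supp_mono (fun σ h => ⟨h.1, by omega, h.2.2⟩) (Supp_cc k)


lemma omega_C (a : ZMod 2) : ω (C a) = C a := by
  have h : ω.comp (C : ZMod 2 →+* R2) = (C : ZMod 2 →+* R2) := Subsingleton.elim _ _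
  exact RingHom.congr_fun h a

include hω in
lemma omega_omega_w : ∀ k, ω (ω (w k)) = w k := by
  intro k
  induction k using Nat.strong_induction_on with
  | _ k IH =>
  rcases Nat.eq_zero_or_pos k with rfl | hk
  · show ω (ω (1 : R2)) = 1
    rw [map_one, map_one]
  have h1 : ∑ i ∈ Finset.range (k+1), ω (w i) * ω (ω (w (k - i))) = 0 := by
    have h := congrArg ω (hω k hk)
    rw [map_sum, map_zero] at h
    simpa [map_mul] using h
  have h2 : ∑ i ∈ Finset.range (k+1), w (k - i) * ω (w i) = 0 := by
    have h := hω k hk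
    rw [← Finset.sum_range_reflect] at h
    rw [← h]
    apply Finset.sum_congr rfl
    intro i hi
    simp only [Finset.mem_range] at hi
    have e1 : k + 1 - 1 - i = k - i := by omega
    have e2 : k - (k - i) = i := by omega
    rw [e1, e2]
  have h3 : ∑ i ∈ Finset.range (k+1), ω (w i) * (ω (ω (w (k - i))) + w (k - i)) = 0 := by
    have hsum : ∑ i ∈ Finset.range (k+1), ω (w i) * ω (ω (w (k - i)))
        + ∑ i ∈ Finset.range (k+1), w (k - i) * ω (w i) = 0 := by rw [h1, h2, add_zero]
    rw [← Finset.sum_add_distrib] at hsum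
    calc ∑ i ∈ Finset.range (k+1), ω (w i) * (ω (ω (w (k - i))) + w (k - i))
        = ∑ i ∈ Finset.range (k+1),
            (ω (w i) * ω (ω (w (k - i))) + w (k - i) * ω (w i)) := by
          apply Finset.sum_congr rfl
          intro i _
          ring
      _ = 0 := hsum
  rw [Finset.range_eq_Ico, Finset.sum_eq_sum_Ico_succ_bot (by omega)] at h3
  have h4 : ∑ i ∈ Finset.Ico 1 (k+1), ω (w i) * (ω (ω (w (k - i))) + w (k - i)) = 0 := by
    apply Finset.sum_eq_zero
    intro i hi
    simp only [Finset.mem_Ico] at hi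
    rw [IH (k - i) (by omega), add_self, mul_zero]
  rw [h4, add_zero] at h3
  have h5 : ω (w 0) = 1 := by show ω 1 = 1; exact map_one ω
  rw [h5, one_mul, Nat.sub_zero] at h3
  calc ω (ω (w k)) = (ω (ω (w k)) + w k) + w k := by
        rw [add_assoc, add_self, add_zero]
    _ = w k := by rw [h3, zero_add]

include hω in
lemma omega_omega (x : R2) : ω (ω x) = x := by
  induction x using MvPolynomial.induction_on with
  | C a => rw [omega_C, omega_C]
  | add p q hp hq => rw [map_add, map_add, hp, hq]
  | mul_X p i hp =>
    rw [map_mul, map_mul, hp]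
    congr 1
    exact omega_omega_w ω hω (i+1)

/-! ### the span of non-squarefree monomials -/

def SqS (x : R2) : Prop := Supp Sq x

lemma Sq_add_left (σ τ : ℕ →₀ ℕ) (h : Sq σ) : Sq (σ + τ) := by
  obtain ⟨i, hi⟩ := h
  exact ⟨i, by simp; omega⟩

lemma SqS_mul_left {x y : R2} (hy : SqS y) : SqS (x * y) :=
  Supp_mul (P := fun _ => True) (fun _ _ => trivial) hy
    (fun σ τ _ h => Sq_add_right σ τ h)

lemma SqS_mul_right {x y : R2} (hx : SqS x) : SqS (x * y) :=
  Supp_mul (Q := fun _ => True) hx (fun _ _ => trivial)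
    (fun σ τ h _ => Sq_add_left σ τ h)

lemma X_eq_w (i : ℕ) : (X i : R2) = w (i+1) := rfl

include hω in
lemma g_SqS (k : ℕ) : SqS (g ω k) :=
  Supp_mono (fun _ h => h.1) (g_Supp ω hω k)

include hω in
lemma delta_SqS (x : R2) : SqS (x + ω x) := by
  induction x using MvPolynomial.induction_on with
  | C a =>
    rw [omega_C, add_self]
    exact Supp_zero
  | add p q hp hq =>
    have h : p + q + ω (p + q) = (p + ω p) + (q + ω q) := by rw [map_add]; ring
    rw [h]
    exact Supp_add hp hq
  | mul_X p i hp =>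
    have hX : ω (X i) = X i + g ω (i+1) := by rw [X_eq_w]; exact omega_w ω (i+1)
    have h : p * X i + ω (p * X i) = (p + ω p) * X i + ω p * g ω (i+1) := by
      rw [map_mul, hX]; ring
    rw [h]
    apply Supp_add
    · exact SqS_mul_right hp
    · exact SqS_mul_left (g_SqS ω hω (i+1))

/-! ### weight bounds -/

def Wle (n : ℕ) (x : R2) : Prop := Supp (fun σ => wtm σ ≤ n) x

lemma Wle_mul {a b : ℕ} {x y : R2} (hx : Wle a x) (hy : Wle b y) : Wle (a + b) (x * y) :=
  Supp_mul hx hy (fun σ τ h1 h2 => by rw [wtm_add]; omega)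

lemma Wle_one (n : ℕ) : Wle n (1 : R2) := by
  have : (1 : R2) = monomial 0 1 := by simp
  rw [this]
  apply Supp_monomial
  simp [wtm]

lemma Wle_w (k : ℕ) : Wle k (w k) := by
  rcases Nat.eq_zero_or_pos k with rfl | hk
  · exact Wle_one 0
  · exact Supp_mono (fun σ h => le_of_eq h.2) (Supp_w k hk)

include hω in
lemma Wle_g (k : ℕ) : Wle k (g ω k) :=
  Supp_mono (fun _ h => h.2.2) (g_Supp ω hω k)

include hω in
lemma Wle_omega_X (i : ℕ) : Wle (i+1) (ω (X i)) := by
  have hX : ω (X i) = X i + g ω (i+1) := by rw [X_eq_w]; exact omega_w ω (i+1)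
  rw [hX]
  exact Supp_add (by rw [X_eq_w]; exact Wle_w (i+1)) (Wle_g ω hω (i+1))

lemma Wle_pow {a : ℕ} {x : R2} (hx : Wle a x) (e : ℕ) : Wle (a * e) (x ^ e) := by
  induction e with
  | zero => simpa using Wle_one 0
  | succ e ih =>
    rw [pow_succ, Nat.mul_succ]
    exact Wle_mul ih hx

lemma Wle_prod {s : Finset ℕ} (f : ℕ → R2) (b : ℕ → ℕ) (h : ∀ i ∈ s, Wle (b i) (f i)) :
    Wle (∑ i ∈ s, b i) (∏ i ∈ s, f i) := by
  classical
  induction s using Finset.induction_on with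
  | empty => simpa using Wle_one 0
  | insert _ _ hni ih =>
    rename_i a s'
    rw [Finset.sum_insert hni, Finset.prod_insert hni]
    exact Wle_mul (h _ (Finset.mem_insert_self _ _))
      (ih fun i hi => h i (Finset.mem_insert_of_mem hi))

include hω in
lemma Wle_omega_monomial (σ : ℕ →₀ ℕ) : Wle (wtm σ) (ω (monomial σ 1)) := by
  rw [MvPolynomial.monomial_eq]
  rw [map_mul, C_1, map_one, one_mul]
  have h : (σ.prod fun i e => (X i : R2) ^ e) = ∏ i ∈ σ.support, (X i) ^ (σ i) := rfl
  rw [h, map_prod]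
  have h2 : wtm σ = ∑ i ∈ σ.support, (i+1) * σ i := rfl
  rw [h2]
  apply Wle_prod
  intro i hi
  rw [map_pow]
  exact Wle_pow (Wle_omega_X ω hω i) (σ i)

lemma ne_zero_eq_one : ∀ a : ZMod 2, a ≠ 0 → a = 1 := by decide

lemma coeff_support_one {x : R2} {σ : ℕ →₀ ℕ} (h : σ ∈ x.support) : x.coeff σ = 1 :=
  ne_zero_eq_one _ (MvPolynomial.mem_support_iff.1 h)

lemma eq_sum_monomial (x : R2) : x = ∑ σ ∈ x.support, monomial σ 1 := by
  conv_lhs => rw [← MvPolynomial.support_sum_monomial_coeff x]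
  apply Finset.sum_congr rfl
  intro σ hσ
  rw [coeff_support_one hσ]

include hω in
lemma Wle_omega {n : ℕ} {x : R2} (h : Wle n x) : Wle n (ω x) := by
  have hx : ω x = ∑ σ ∈ x.support, ω (monomial σ 1) := by
    conv_lhs => rw [eq_sum_monomial x]
    rw [map_sum]
  rw [hx]
  apply Supp_sum
  intro σ hσ
  exact Supp_mono (fun τ hτ => le_trans hτ (h σ hσ)) (Wle_omega_monomial ω hω σ)


/-! ### length filtration and the associated graded differential `d1` -/

def Flen (l : ℕ) (x : R2) : Prop := Supp (fun σ => l ≤ len σ) x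

lemma Flen_mono {a b : ℕ} (h : b ≤ a) {x : R2} (hx : Flen a x) : Flen b x :=
  Supp_mono (fun σ hσ => le_trans h hσ) hx

lemma Flen_zero (x : R2) : Flen 0 x := fun _ _ => Nat.zero_le _

lemma two_eq_zero' : (2 : R2) = 0 := by
  have := add_self (1 : R2)
  rwa [one_add_one_eq_two] at this

lemma Supp_monomial_len (τ : ℕ →₀ ℕ) : Supp (fun τ' => len τ ≤ len τ') ((monomial τ 1 : R2)) :=
  Supp_monomial (P := fun τ' => len τ ≤ len τ') (le_refl _) 1

lemma Supp_X (i : ℕ) : Supp (fun τ => len τ = 1) (X i : R2) := by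
  rw [MvPolynomial.X]
  apply Supp_monomial
  exact len_single i 1

/-- decomposition of a nonzero monomial -/
lemma monomial_decomp {σ : ℕ →₀ ℕ} {i : ℕ} (hi : i ∈ σ.support) :
    (σ - Finsupp.single i 1) + Finsupp.single i 1 = σ ∧
    len (σ - Finsupp.single i 1) + 1 = len σ ∧
    monomial σ (1 : ZMod 2) = monomial (σ - Finsupp.single i 1) 1 * X i := by
  have hle : Finsupp.single i 1 ≤ σ := by
    rw [Finsupp.single_le_iff]
    exact Nat.one_le_iff_ne_zero.2 (Finsupp.mem_support_iff.1 hi)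
  have h1 : (σ - Finsupp.single i 1) + Finsupp.single i 1 = σ := tsub_add_cancel_of_le hle
  refine ⟨h1, ?_, ?_⟩
  · have := len_add (σ - Finsupp.single i 1) (Finsupp.single i 1)
    rw [h1, len_single] at this
    omega
  · rw [MvPolynomial.X, MvPolynomial.monomial_mul, mul_one, h1]

noncomputable def d1 : Derivation (ZMod 2) R2 R2 :=
  MvPolynomial.mkDerivation _ (fun i => cc (i+1))

lemma d1_X (i : ℕ) : d1 (X i) = cc (i+1) := MvPolynomial.mkDerivation_X _ _ i

include hω in
lemma delta_len_monomial : ∀ σ : ℕ →₀ ℕ,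
    Supp (fun τ => len σ + 1 ≤ len τ) (monomial σ 1 + ω (monomial σ 1)) := by
  suffices hsuf : ∀ n σ, len σ = n →
      Supp (fun τ => len σ + 1 ≤ len τ) ((monomial σ 1 : R2) + ω (monomial σ 1)) by
    exact fun σ => hsuf (len σ) σ rfl
  intro n
  induction n using Nat.strong_induction_on with
  | _ n IH =>
  intro σ hn
  subst hn
  rcases eq_or_ne σ 0 with rfl | h0
  · have h1 : (monomial 0 1 : R2) = 1 := by simp
    rw [h1, map_one, add_self]
    exact Supp_zero
  obtain ⟨i, hi⟩ := Finsupp.support_nonempty_iff.2 h0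
  obtain ⟨h1, h2, h3⟩ := monomial_decomp hi
  set τ := σ - Finsupp.single i 1 with hτ
  have hX : ω (X i) = X i + g ω (i+1) := by rw [X_eq_w]; exact omega_w ω (i+1)
  set q : R2 := monomial τ 1 with hq
  have key : monomial σ 1 + ω (monomial σ 1)
      = (q + ω q) * X i + (ω q) * g ω (i+1) := by
    rw [h3, map_mul, hX]; ring
  rw [key]
  have hδq : Supp (fun τ' => len τ + 1 ≤ len τ') (q + ω q) := IH (len τ) (by omega) τ rfl

  have hωq : Supp (fun τ' => len τ ≤ len τ') (ω q) := by
    have : ω q = q + (q + ω q) := by rw [← add_assoc, add_self, zero_add]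
    rw [this]
    apply Supp_add
    · exact Supp_monomial_len τ
    · exact Supp_mono (fun σ' h => by omega) hδq
  apply Supp_add
  · exact Supp_mul hδq (Supp_X i) (fun a b ha hb => by rw [len_add]; omega)
  · exact Supp_mul hωq (Supp_mono (fun _ h => h.2.1) (g_Supp ω hω (i+1)))
      (fun a b ha hb => by rw [len_add]; omega)

include hω in
lemma T_monomial : ∀ σ : ℕ →₀ ℕ,
    Supp (fun τ => len σ + 2 ≤ len τ)
      ((monomial σ 1 + ω (monomial σ 1)) + d1 (monomial σ 1)) := by
  suffices hsuf : ∀ n σ, len σ = n →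
      Supp (fun τ => len σ + 2 ≤ len τ)
        (((monomial σ 1 : R2) + ω (monomial σ 1)) + d1 (monomial σ 1)) by
    exact fun σ => hsuf (len σ) σ rfl
  intro n
  induction n using Nat.strong_induction_on with
  | _ n IH =>
  intro σ hn
  subst hn
  rcases eq_or_ne σ 0 with rfl | h0
  · have h1 : (monomial 0 1 : R2) = 1 := by simp
    rw [h1, map_one, add_self, Derivation.map_one_eq_zero, add_zero]
    exact Supp_zero
  obtain ⟨i, hi⟩ := Finsupp.support_nonempty_iff.2 h0
  obtain ⟨h1, h2, h3⟩ := monomial_decomp hi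
  set τ := σ - Finsupp.single i 1 with hτ
  have hX : ω (X i) = X i + g ω (i+1) := by rw [X_eq_w]; exact omega_w ω (i+1)
  set q : R2 := monomial τ 1 with hq
  have hleib : d1 (q * X i) = q * cc (i+1) + X i * d1 q := by
    rw [Derivation.leibniz, d1_X, smul_eq_mul, smul_eq_mul]
  have key : (monomial σ 1 + ω (monomial σ 1)) + d1 (monomial σ 1)
      = ((q + ω q) + d1 q) * X i + (g ω (i+1) + cc (i+1)) * q
        + g ω (i+1) * (q + ω q) := by
    rw [h3, map_mul, hX, hleib]
    linear_combination (-(g ω (i+1) * q)) * two_eq_zero'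
  rw [key]
  have hδq : Supp (fun τ' => len τ + 1 ≤ len τ') (q + ω q) :=
    delta_len_monomial ω hω τ
  have hT : Supp (fun τ' => len τ + 2 ≤ len τ') ((q + ω q) + d1 q) :=
    IH (len τ) (by omega) τ rfl
  apply Supp_add
  apply Supp_add
  · exact Supp_mul hT (Supp_X i) (fun a b ha hb => by rw [len_add]; omega)
  · exact Supp_mul (Supp_mono (fun _ h => h.2.1) (g_cc_Supp ω hω (i+1)))
      (Supp_monomial_len τ) (fun a b ha hb => by rw [len_add]; omega)
  · exact Supp_mul (Supp_mono (fun _ h => h.2.1) (g_Supp ω hω (i+1))) hδq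
      (fun a b ha hb => by rw [len_add]; omega)

include hω in
lemma delta_Flen {l : ℕ} {x : R2} (h : Flen l x) : Flen (l+1) (x + ω x) := by
  have hx : x + ω x = ∑ σ ∈ x.support, (monomial σ 1 + ω (monomial σ 1)) := by
    rw [Finset.sum_add_distrib, ← map_sum, ← eq_sum_monomial]
  rw [hx]
  apply Supp_sum
  intro σ hσ
  exact Supp_mono (fun τ hτ => by have := h σ hσ; omega) (delta_len_monomial ω hω σ)

include hω in
lemma T_Flen {l : ℕ} {x : R2} (h : Flen l x) : Flen (l+2) ((x + ω x) + d1 x) := by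
  have hx : (x + ω x) + d1 x
      = ∑ σ ∈ x.support, ((monomial σ 1 + ω (monomial σ 1)) + d1 (monomial σ 1)) := by
    rw [Finset.sum_add_distrib, Finset.sum_add_distrib, ← map_sum, ← map_sum,
      ← eq_sum_monomial]
  rw [hx]
  apply Supp_sum
  intro σ hσ
  exact Supp_mono (fun τ hτ => by have := h σ hσ; omega) (T_monomial ω hω σ)


/-! ### the contraction `hM` and the circle of monomial combinatorics -/

noncomputable def tauM (σ : ℕ →₀ ℕ) (j : ℕ) : ℕ →₀ ℕ :=
  σ - Finsupp.single j 1 + Finsupp.single ((j-1)/2) 2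

noncomputable def upM (σ : ℕ →₀ ℕ) (p : ℕ) : ℕ →₀ ℕ :=
  σ - Finsupp.single p 2 + Finsupp.single (2*p+1) 1

def Jset (σ : ℕ →₀ ℕ) : Finset ℕ := σ.support.filter (fun j => j % 2 = 1 ∧ σ j % 2 = 1)

lemma mem_Jset {σ : ℕ →₀ ℕ} {j : ℕ} : j ∈ Jset σ ↔ (j % 2 = 1 ∧ σ j % 2 = 1) := by
  unfold Jset
  rw [Finset.mem_filter]
  constructor
  · exact fun h => h.2
  · intro h
    exact ⟨Finsupp.mem_support_iff.2 (by omega), h⟩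

lemma tauM_apply (σ : ℕ →₀ ℕ) (j x : ℕ) :
    tauM σ j x = σ x - (if j = x then 1 else 0) + (if (j-1)/2 = x then 2 else 0) := by
  simp [tauM, Finsupp.tsub_apply, Finsupp.single_apply]

lemma upM_apply (σ : ℕ →₀ ℕ) (p x : ℕ) :
    upM σ p x = σ x - (if p = x then 2 else 0) + (if 2*p+1 = x then 1 else 0) := by
  simp [upM, Finsupp.tsub_apply, Finsupp.single_apply]

lemma natCast_zmod2 (n : ℕ) : (n : ZMod 2) = if n % 2 = 1 then 1 else 0 := by
  have h : ((n % 2 : ℕ) : ZMod 2) = (n : ZMod 2) := ZMod.natCast_mod n 2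
  rcases Nat.mod_two_eq_zero_or_one n with h2 | h2
  · rw [← h, h2]
    simp
  · rw [← h, h2]
    simp

lemma d1_monomial (σ : ℕ →₀ ℕ) :
    d1 (monomial σ 1) = ∑ j ∈ Jset σ, monomial (tauM σ j) 1 := by
  rw [show d1 (monomial σ 1) = MvPolynomial.mkDerivation (ZMod 2) (fun i => cc (i+1)) (monomial σ 1) from rfl]
  rw [MvPolynomial.mkDerivation_monomial, one_smul]
  rw [Finsupp.sum]
  rw [Jset, Finset.sum_filter]
  apply Finset.sum_congr rfl
  intro j hj
  by_cases hodd : j % 2 = 1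
  · by_cases hpar : σ j % 2 = 1
    · rw [if_pos ⟨hodd, hpar⟩]
      have hcc : cc (j+1) = monomial (Finsupp.single ((j-1)/2) 2) 1 := by
        rw [cc_monomial (j+1) (by omega) (by omega)]
        have he : (j+1)/2 - 1 = (j-1)/2 := by omega
        rw [he]
      rw [hcc, natCast_zmod2, if_pos hpar, smul_eq_mul, MvPolynomial.monomial_mul, mul_one]
      rfl
    · rw [if_neg (by tauto)]
      rw [natCast_zmod2, if_neg hpar]
      rw [MvPolynomial.monomial_zero, zero_smul]
  · rw [if_neg (by tauto)]
    have hcc : cc (j+1) = 0 := by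
      rw [cc, if_neg]
      rintro ⟨-, h2⟩
      omega
    rw [hcc, smul_zero]

/-- pair `p` is active in `σ` -/
def Act (σ : ℕ →₀ ℕ) (p : ℕ) : Prop := 2 ≤ σ p ∨ σ (2*p+1) % 2 = 1

instance Act.dec (σ : ℕ →₀ ℕ) : DecidablePred (Act σ) := fun p => by
  unfold Act
  infer_instance

open scoped Classical in
noncomputable def hM (σ : ℕ →₀ ℕ) : R2 :=
  if h : ∃ p, Act σ p then
    if σ (2 * Nat.find h + 1) % 2 = 1 then 0
    else monomial (upM σ (Nat.find h)) 1
  else 0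

noncomputable def H (x : R2) : R2 := ∑ σ ∈ x.support, x.coeff σ • hM σ

lemma H_zero : H 0 = 0 := by simp [H]

lemma H_add (x y : R2) : H (x + y) = H x + H y := by
  classical
  have key : ∀ u : Finset (ℕ →₀ ℕ), ∀ z : R2, z.support ⊆ u →
      H z = ∑ σ ∈ u, z.coeff σ • hM σ := by
    intro u z hu
    rw [H]
    apply Finset.sum_subset hu
    intro σ _ hσ
    rw [MvPolynomial.notMem_support_iff.1 hσ, zero_smul]
  rw [key (x.support ∪ y.support) (x+y)
      (le_trans (MvPolynomial.support_add) (le_refl _)),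
    key (x.support ∪ y.support) x Finset.subset_union_left,
    key (x.support ∪ y.support) y Finset.subset_union_right,
    ← Finset.sum_add_distrib]
  apply Finset.sum_congr rfl
  intro σ _
  rw [MvPolynomial.coeff_add, add_smul]

lemma H_monomial (σ : ℕ →₀ ℕ) : H (monomial σ 1) = hM σ := by
  rw [H, MvPolynomial.support_monomial, if_neg (one_ne_zero)]
  rw [Finset.sum_singleton]
  rw [MvPolynomial.coeff_monomial, if_pos rfl, one_smul]

lemma H_sum {s : Finset α} (f : α → R2) : H (∑ a ∈ s, f a) = ∑ a ∈ s, H (f a) := by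
  classical
  induction s using Finset.induction_on with
  | empty => simp [H_zero]
  | insert a s hni ih =>
    rw [Finset.sum_insert hni, Finset.sum_insert hni, H_add, ih]


lemma tauM_parity {σ : ℕ →₀ ℕ} {j : ℕ} (x : ℕ) (hx : ¬ j = x) :
    tauM σ j x % 2 = σ x % 2 := by
  rw [tauM_apply, if_neg hx]
  split_ifs <;> omega

lemma upM_parity {σ : ℕ →₀ ℕ} {p : ℕ} (hp : 2 ≤ σ p) (x : ℕ) (hx : ¬ 2*p+1 = x) :
    upM σ p x % 2 = σ x % 2 := by
  rw [upM_apply, if_neg hx]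
  by_cases e : p = x
  · subst e
    split_ifs <;> omega
  · split_ifs <;> omega

lemma Act_tauM {σ : ℕ →₀ ℕ} {j : ℕ} (hj : j % 2 = 1) (hσj : σ j % 2 = 1) (q : ℕ)
    (hq : q ≠ (j-1)/2) : Act (tauM σ j) q ↔ Act σ q := by
  have hv1 := tauM_apply σ j q
  have hv2 := tauM_apply σ j (2*q+1)
  unfold Act
  rw [hv1, hv2]
  by_cases h1 : q = j
  · subst h1
    rw [if_pos rfl, if_neg (by omega), if_neg (by omega), if_neg (by omega)]
    omega
  · rw [if_neg (by omega), if_neg (by omega), if_neg (by omega)]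
    split_ifs with h3 <;> omega

lemma hM_eval_odd {σ : ℕ →₀ ℕ} (P : ℕ) (hact : Act σ P) (hmin : ∀ q < P, ¬ Act σ q)
    (hpar : σ (2*P+1) % 2 = 1) : hM σ = 0 := by
  have hex : ∃ p, Act σ p := ⟨P, hact⟩
  have hfind : Nat.find hex = P := by
    rw [Nat.find_eq_iff]
    exact ⟨hact, hmin⟩
  unfold hM
  rw [dif_pos hex, hfind, if_pos hpar]

lemma hM_eval_even {σ : ℕ →₀ ℕ} (P : ℕ) (hact : Act σ P) (hmin : ∀ q < P, ¬ Act σ q)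
    (hpar : ¬ σ (2*P+1) % 2 = 1) : hM σ = monomial (upM σ P) 1 := by
  have hex : ∃ p, Act σ p := ⟨P, hact⟩
  have hfind : Nat.find hex = P := by
    rw [Nat.find_eq_iff]
    exact ⟨hact, hmin⟩
  unfold hM
  rw [dif_pos hex, hfind, if_neg hpar]

lemma key_identity (σ : ℕ →₀ ℕ) (hσ : Sq σ) :
    d1 (hM σ) + H (d1 (monomial σ 1)) = monomial σ 1 := by
  obtain ⟨i, hi⟩ := hσ
  have hex : ∃ p, Act σ p := ⟨i, Or.inl hi⟩
  set P := Nat.find hex with hP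
  have hact : Act σ P := Nat.find_spec hex
  have hmin : ∀ q < P, ¬ Act σ q := fun q hq => Nat.find_min hex hq
  rw [d1_monomial, H_sum]
  have hHm : ∑ j ∈ Jset σ, H (monomial (tauM σ j) 1) = ∑ j ∈ Jset σ, hM (tauM σ j) :=
    Finset.sum_congr rfl (fun j _ => H_monomial _)
  rw [hHm]
  by_cases hodd : σ (2*P+1) % 2 = 1
  · -- Case A : the minimal active pair is ε-active
    rw [hM_eval_odd P hact hmin hodd, map_zero, zero_add]
    have hj0 : (2*P+1) ∈ Jset σ := mem_Jset.2 ⟨by omega, hodd⟩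
    rw [Finset.sum_eq_single_of_mem (2*P+1) hj0]
    · -- main term
      have hvP : tauM σ (2*P+1) P = σ P + 2 := by
        rw [tauM_apply]; split_ifs <;> omega
      have hact' : Act (tauM σ (2*P+1)) P := Or.inl (by omega)
      have hmin' : ∀ q < P, ¬ Act (tauM σ (2*P+1)) q := by
        intro q hq
        rw [Act_tauM (by omega) hodd q (by omega)]
        exact hmin q hq
      have hpar' : ¬ tauM σ (2*P+1) (2*P+1) % 2 = 1 := by
        rw [tauM_apply]; split_ifs <;> omega
      rw [hM_eval_even P hact' hmin' hpar']
      have hco : upM (tauM σ (2*P+1)) P = σ := by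
        ext x
        rw [upM_apply, tauM_apply]
        by_cases e1 : x = P
        · subst e1; split_ifs <;> omega
        · by_cases e2 : x = 2*P+1
          · subst e2; split_ifs <;> omega
          · split_ifs <;> omega
      rw [hco]
    · -- other terms vanish
      intro j hj hne
      obtain ⟨hj1, hj2⟩ := mem_Jset.1 hj
      have hpj : 2*((j-1)/2)+1 = j := by omega
      have hpj_act : Act σ ((j-1)/2) := Or.inr (by rw [hpj]; exact hj2)
      have hpj_gt : P < (j-1)/2 := by
        rcases Nat.lt_or_ge ((j-1)/2) P with h | h
        · exact absurd hpj_act (hmin _ h)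
        · rcases Nat.eq_or_lt_of_le h with h' | h'
          · exfalso; apply hne; omega
          · exact h'
      have hact'' : Act (tauM σ j) P := by
        rw [Act_tauM hj1 hj2 P (by omega)]
        exact hact
      have hmin'' : ∀ q < P, ¬ Act (tauM σ j) q := by
        intro q hq
        rw [Act_tauM hj1 hj2 q (by omega)]
        exact hmin q hq
      have hpar'' : tauM σ j (2*P+1) % 2 = 1 := by
        rw [tauM_parity (2*P+1) (by omega)]
        exact hodd
      exact hM_eval_odd P hact'' hmin'' hpar''
  · -- Case B : the minimal active pair is s-active only
    have hsP : 2 ≤ σ P := by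
      rcases hact with h | h
      · exact h
      · omega
    rw [hM_eval_even P hact hmin hodd]
    rw [d1_monomial]
    have hJup : Jset (upM σ P) = insert (2*P+1) (Jset σ) := by
      ext j
      rw [mem_Jset, Finset.mem_insert, mem_Jset]
      by_cases e1 : j = 2*P+1
      · subst e1
        rw [upM_apply]
        split_ifs <;> omega
      · rw [upM_parity hsP j (by omega)]
        omega
    rw [hJup, Finset.sum_insert (by rw [mem_Jset]; omega)]
    have hmain : tauM (upM σ P) (2*P+1) = σ := by
      ext x
      rw [tauM_apply, upM_apply]
      by_cases e1 : x = P
      · subst e1; split_ifs <;> omega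
      · by_cases e2 : x = 2*P+1
        · subst e2; split_ifs <;> omega
        · split_ifs <;> omega
    rw [hmain]
    have hterms : ∀ j ∈ Jset σ, hM (tauM σ j) = monomial (tauM (upM σ P) j) 1 := by
      intro j hj
      obtain ⟨hj1, hj2⟩ := mem_Jset.1 hj
      have hpj : 2*((j-1)/2)+1 = j := by omega
      have hpj_act : Act σ ((j-1)/2) := Or.inr (by rw [hpj]; exact hj2)
      have hpj_gt : P < (j-1)/2 := by
        rcases Nat.lt_or_ge ((j-1)/2) P with h | h
        · exact absurd hpj_act (hmin _ h)
        · rcases Nat.eq_or_lt_of_le h with h' | h'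
          · exfalso
            apply hodd
            have he : 2*P+1 = j := by omega
            rw [he]
            exact hj2
          · exact h'
      have hact'' : Act (tauM σ j) P := by
        rw [Act_tauM hj1 hj2 P (by omega)]
        exact hact
      have hmin'' : ∀ q < P, ¬ Act (tauM σ j) q := by
        intro q hq
        rw [Act_tauM hj1 hj2 q (by omega)]
        exact hmin q hq
      have hpar'' : ¬ tauM σ j (2*P+1) % 2 = 1 := by
        rw [tauM_parity (2*P+1) (by omega)]
        exact hodd
      rw [hM_eval_even P hact'' hmin'' hpar'']
      have hco : upM (tauM σ j) P = tauM (upM σ P) j := by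
        ext x
        rw [upM_apply, tauM_apply, tauM_apply, upM_apply]
        by_cases e1 : x = P
        · subst e1; split_ifs <;> omega
        · by_cases e2 : x = j
          · subst e2; split_ifs <;> omega
          · split_ifs <;> omega
      rw [hco]
    rw [Finset.sum_congr rfl hterms]
    rw [add_assoc, add_self, add_zero]


lemma hM_cases (σ : ℕ →₀ ℕ) :
    hM σ = 0 ∨ ∃ p, 2 ≤ σ p ∧ hM σ = monomial (upM σ p) 1 := by
  unfold hM
  split_ifs with h1 h2
  · left; rfl
  · right
    refine ⟨Nat.find h1, ?_, rfl⟩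
    have hs := Nat.find_spec h1
    rcases hs with hs | hs
    · exact hs
    · omega
  · left; rfl

lemma len_upM {σ : ℕ →₀ ℕ} {p : ℕ} (hp : 2 ≤ σ p) : len (upM σ p) + 1 = len σ := by
  have hle : Finsupp.single p 2 ≤ σ := by
    rw [Finsupp.single_le_iff]; exact hp
  have h1 : (σ - Finsupp.single p 2) + Finsupp.single p 2 = σ := tsub_add_cancel_of_le hle
  have h2 := len_add (σ - Finsupp.single p 2) (Finsupp.single p 2)
  rw [h1, len_single] at h2
  have h3 := len_add (σ - Finsupp.single p 2) (Finsupp.single (2*p+1) 1)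
  rw [len_single] at h3
  rw [upM] at *
  omega

lemma wtm_upM {σ : ℕ →₀ ℕ} {p : ℕ} (hp : 2 ≤ σ p) : wtm (upM σ p) = wtm σ := by
  have hle : Finsupp.single p 2 ≤ σ := by
    rw [Finsupp.single_le_iff]; exact hp
  have h1 : (σ - Finsupp.single p 2) + Finsupp.single p 2 = σ := tsub_add_cancel_of_le hle
  have h2 := wtm_add (σ - Finsupp.single p 2) (Finsupp.single p 2)
  rw [h1, wtm_single] at h2
  have h3 := wtm_add (σ - Finsupp.single p 2) (Finsupp.single (2*p+1) 1)
  rw [wtm_single] at h3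
  rw [upM] at *
  omega

lemma H_Flen {l : ℕ} {x : R2} (h : Flen l x) : Flen (l-1) (H x) := by
  rw [H]
  apply Supp_sum
  intro σ hσ
  apply Supp_smul
  rcases hM_cases σ with h0 | ⟨p, hp, hm⟩
  · rw [h0]; exact Supp_zero
  · rw [hm]
    apply Supp_monomial
    have h1 := len_upM hp
    have h2 := h σ hσ
    omega

lemma H_Wle {n : ℕ} {x : R2} (h : Wle n x) : Wle n (H x) := by
  rw [H]
  apply Supp_sum
  intro σ hσ
  apply Supp_smul
  rcases hM_cases σ with h0 | ⟨p, hp, hm⟩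
  · rw [h0]; exact Supp_zero
  · rw [hm]
    apply Supp_monomial
    rw [wtm_upM hp]
    exact h σ hσ

lemma contract {z : R2} (hz : SqS z) : d1 (H z) + H (d1 z) = z := by
  have h1 : H z = ∑ σ ∈ z.support, hM σ := by
    rw [H]
    apply Finset.sum_congr rfl
    intro σ hσ
    rw [coeff_support_one hσ, one_smul]
  have h2 : d1 z = ∑ σ ∈ z.support, d1 (monomial σ 1) := by
    conv_lhs => rw [eq_sum_monomial z]
    rw [map_sum]
  conv_rhs => rw [eq_sum_monomial z]
  rw [h1, h2, map_sum, H_sum, ← Finset.sum_add_distrib]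
  apply Finset.sum_congr rfl
  intro σ hσ
  exact key_identity σ (hz σ hσ)

include hω in
lemma descent (n : ℕ) : ∀ k, ∀ z : R2, Wle n z → SqS z → ω z = z →
    Flen (n + 1 - k) z → ∃ y, z = y + ω y := by
  intro k
  induction k with
  | zero =>
    intro z hW _ _ hF
    have hz : z = 0 := by
      by_contra h
      obtain ⟨σ, hσ⟩ := MvPolynomial.support_nonempty.2 h
      have h1 := hW σ hσ
      have h2 := hF σ hσ
      have h3 := len_le_wtm σ
      omega
    exact ⟨0, by rw [hz, map_zero, add_zero]⟩
  | succ k IH =>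
    intro z hW hS hfix hF
    have hδz : z + ω z = 0 := by rw [hfix, add_self]
    have hHW : Wle n (H z) := H_Wle hW
    -- the corrected element
    have hz'F : Flen (n + 1 - (k+1) + 1) (z + (H z + ω (H z))) := by
      have heq : z + (H z + ω (H z))
          = H ((z + ω z) + d1 z) + (((H z) + ω (H z)) + d1 (H z)) := by
        rw [hδz, zero_add]
        linear_combination (-1 : R2) * contract hS
      rw [heq]
      apply Supp_add
      · have hT := T_Flen ω hω hF
        have hH := H_Flen hT
        exact Flen_mono (by omega) hH
      · have hHF : Flen (n + 1 - (k+1) - 1) (H z) := H_Flen hF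
        have hT := T_Flen ω hω hHF
        exact Flen_mono (by omega) hT
    have hW' : Wle n (z + (H z + ω (H z))) :=
      Supp_add hW (Supp_add hHW (Wle_omega ω hω hHW))
    have hS' : SqS (z + (H z + ω (H z))) := Supp_add hS (delta_SqS ω hω (H z))
    have hfix' : ω (z + (H z + ω (H z))) = z + (H z + ω (H z)) := by
      rw [map_add, map_add, omega_omega ω hω (H z), hfix]
      ring
    obtain ⟨y, hy⟩ := IH (z + (H z + ω (H z))) hW' hS' hfix'
      (Flen_mono (by omega) hz'F)
    refine ⟨y + H z, ?_⟩
    rw [map_add]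
    calc z = (z + (H z + ω (H z))) + (H z + ω (H z)) := by
          linear_combination (-(H z + ω (H z))) * two_eq_zero'
      _ = (y + ω y) + (H z + ω (H z)) := by rw [hy]
      _ = y + H z + (ω y + ω (H z)) := by ring

include hω in
lemma span_SqS {x : R2} (hx : x ∈ Ideal.span (Set.range fun y : R2 => y + ω y)) :
    SqS x := by
  refine Submodule.span_induction ?_ ?_ ?_ ?_ hx
  · rintro u ⟨y, rfl⟩
    exact delta_SqS ω hω y
  · exact Supp_zero
  · exact fun a b _ _ ha hb => Supp_add ha hb
  · intro a b _ hb
    rw [smul_eq_mul]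
    exact SqS_mul_left hb

lemma Wle_self (x : R2) : Wle (x.support.sup wtm) x := fun σ h => Finset.le_sup h

end FT

/-- First Transversality Theorem: in `R = 𝔽₂[w₁, w₂, …]` with the involution `ω`
defined by `∑_{i=0}^{k} wᵢ · ω (w_{k-i}) = 0`, fixed subring `S = {x : ω x = x}` and
`I = {y + ω y : y ∈ R}`, we have `R·I ∩ S = I`, where `R·I` is the ideal of `R`
generated by `I`. -/
theorem first_transversality
    (ω : MvPolynomial ℕ (ZMod 2) →+* MvPolynomial ℕ (ZMod 2))
    (hω : ∀ k : ℕ, 1 ≤ k → ∑ i ∈ Finset.range (k + 1), w i * ω (w (k - i)) = 0) :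
    {x : MvPolynomial ℕ (ZMod 2) |
        x ∈ Ideal.span (Set.range fun y : MvPolynomial ℕ (ZMod 2) => y + ω y) ∧
        ω x = x} =
      Set.range (fun y : MvPolynomial ℕ (ZMod 2) => y + ω y) := by
  ext x
  simp only [Set.mem_setOf_eq, Set.mem_range]
  constructor
  · rintro ⟨hspan, hfix⟩
    have hS : FT.SqS x := FT.span_SqS ω hω hspan
    have hW : FT.Wle (x.support.sup FT.wtm) x := FT.Wle_self x
    obtain ⟨y, hy⟩ := FT.descent ω hω (x.support.sup FT.wtm)
      (x.support.sup FT.wtm + 1) x hW hS hfix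
      (by
        have h0 : x.support.sup FT.wtm + 1 - (x.support.sup FT.wtm + 1) = 0 := by omega
        rw [h0]
        exact FT.Flen_zero x)
    exact ⟨y, hy.symm⟩
  · rintro ⟨y, rfl⟩
    refine ⟨Ideal.subset_span ⟨y, rfl⟩, ?_⟩
    rw [map_add, FT.omega_omega ω hω y]
    ring
end
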